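/- arXiv:1907.02314 — 8 statements merged into one kernel-verified Lean document; each statement's English description precedes it below -/
import Mathlib

section
/- (Corollary 1, integral form of passivity.) If γ > 0 is a constant, U : [0,∞) → ℝ is continuous and the actuated boundary condition C·w_z(1,t) = −γ·U(t) holds for all t ≥ 0, then for every T ≥ 0, H(T) − H(0) ≤ ∫₀ᵀ (−γ·U(t))·w_t(1,t) dt. -/
set_option maxHeartbeats 1000000


open MeasureTheory intervalIntegral

/-- Corollary 1, integral form: H(T) − H(0) ≤ ∫₀ᵀ (−γ·U(t))·w_t(1,t) dt. -/
theorem passivity_integral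
    (ρ C b : ℝ) (hρ : 0 < ρ) (hC : 0 < C) (hb : 0 < b)
    (w wz wt wzz wzt wtt : ℝ → ℝ → ℝ)
    (hwz : ∀ z t : ℝ, HasDerivAt (fun ζ => w ζ t) (wz z t) z)
    (hwt : ∀ z t : ℝ, HasDerivAt (fun τ => w z τ) (wt z t) t)
    (hwzz : ∀ z t : ℝ, HasDerivAt (fun ζ => wz ζ t) (wzz z t) z)
    (hwzt : ∀ z t : ℝ, HasDerivAt (fun ζ => wt ζ t) (wzt z t) z)
    (hwzt' : ∀ z t : ℝ, HasDerivAt (fun τ => wz z τ) (wzt z t) t)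
    (hwtt : ∀ z t : ℝ, HasDerivAt (fun τ => wt z τ) (wtt z t) t)
    (hwzc : Continuous (Function.uncurry wz))
    (hwtc : Continuous (Function.uncurry wt))
    (hwzzc : Continuous (Function.uncurry wzz))
    (hwztc : Continuous (Function.uncurry wzt))
    (hwttc : Continuous (Function.uncurry wtt))
    (hpde : ∀ z ∈ Set.Icc (0:ℝ) 1, ∀ t : ℝ, 0 ≤ t →
      ρ * wtt z t = C * wzz z t - b * wt z t)
    (hclamp : ∀ t : ℝ, 0 ≤ t → w 0 t = 0)
    (γ : ℝ) (hγ : 0 < γ) (U : ℝ → ℝ) (hUc : Continuous U)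
    (hbc : ∀ t : ℝ, 0 ≤ t → C * wz 1 t = -γ * U t) :
    ∀ T : ℝ, 0 ≤ T →
      ((1/2) * ∫ z in (0:ℝ)..1, (C * (wz z T)^2 + ρ * (wt z T)^2)) - ((1/2) * ∫ z in (0:ℝ)..1, (C * (wz z (0:ℝ))^2 + ρ * (wt z (0:ℝ))^2))
        ≤ ∫ t in (0:ℝ)..T, (-γ * U t) * wt 1 t := by
  intro T hT
  -- helper continuity facts
  have cz : ∀ (g : ℝ → ℝ → ℝ), Continuous (Function.uncurry g) →
      ∀ t : ℝ, Continuous fun z => g z t := by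
    intro g hg t
    exact hg.comp (continuous_id.prodMk continuous_const)
  have ct : ∀ (g : ℝ → ℝ → ℝ), Continuous (Function.uncurry g) →
      ∀ z : ℝ, Continuous fun t => g z t := by
    intro g hg z
    exact hg.comp (continuous_const.prodMk continuous_id)
  set f : ℝ → ℝ → ℝ :=
    fun z t => C * (wz z t * wzt z t) + ρ * (wt z t * wtt z t) with hf
  have hfc : Continuous (Function.uncurry f) := by
    apply Continuous.add
    · exact continuous_const.mul (hwzc.mul hwztc)
    · exact continuous_const.mul (hwtc.mul hwttc)
  -- w_t(0,t) = 0 for t ≥ 0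
  have hwt0 : ∀ t : ℝ, 0 ≤ t → wt 0 t = 0 := by
    intro t ht
    have h1 : HasDerivWithinAt (fun τ => w 0 τ) (wt 0 t) (Set.Ici 0) t :=
      (hwt 0 t).hasDerivWithinAt
    have h2 : HasDerivWithinAt (fun _ : ℝ => (0:ℝ)) (wt 0 t) (Set.Ici 0) t :=
      h1.congr (fun y hy => (hclamp y hy).symm) (hclamp t ht).symm
    have hu : UniqueDiffWithinAt ℝ (Set.Ici (0:ℝ)) t := uniqueDiffOn_Ici 0 t ht
    have h3 := h2.derivWithin hu
    have h4 := (hasDerivWithinAt_const t (Set.Ici (0:ℝ)) (0:ℝ)).derivWithin hu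
    rw [h3] at h4
    exact h4
  -- Step A: time FTC for each z
  have stepA : ∀ z : ℝ,
      (∫ t in (0:ℝ)..T, f z t)
        = (1/2) * (C * (wz z T)^2 + ρ * (wt z T)^2)
          - (1/2) * (C * (wz z 0)^2 + ρ * (wt z 0)^2) := by
    intro z
    apply intervalIntegral.integral_eq_sub_of_hasDerivAt
    · intro t _
      have h1 := ((hwzt' z t).pow 2).const_mul C
      have h2 := ((hwtt z t).pow 2).const_mul ρ
      have h3 := ((h1.add h2).const_mul (1/2 : ℝ))
      refine h3.congr_deriv ?_
      simp only [hf]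
      push_cast
      ring
    · exact ((ct f hfc z).intervalIntegrable 0 T)
  -- Step B: LHS as a single z-integral of time integrals
  have hI1 : IntervalIntegrable (fun z => C * (wz z T)^2 + ρ * (wt z T)^2)
      volume 0 1 := by
    exact (Continuous.add (continuous_const.mul ((cz wz hwzc T).pow 2))
      (continuous_const.mul ((cz wt hwtc T).pow 2))).intervalIntegrable 0 1
  have hI0 : IntervalIntegrable (fun z => C * (wz z 0)^2 + ρ * (wt z 0)^2)
      volume 0 1 := by
    exact (Continuous.add (continuous_const.mul ((cz wz hwzc 0).pow 2))
      (continuous_const.mul ((cz wt hwtc 0).pow 2))).intervalIntegrable 0 1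
  have stepB :
      ((1/2) * ∫ z in (0:ℝ)..1, (C * (wz z T)^2 + ρ * (wt z T)^2))
        - ((1/2) * ∫ z in (0:ℝ)..1, (C * (wz z (0:ℝ))^2 + ρ * (wt z (0:ℝ))^2))
      = ∫ z in (0:ℝ)..1, ∫ t in (0:ℝ)..T, f z t := by
    rw [← intervalIntegral.integral_const_mul, ← intervalIntegral.integral_const_mul,
      ← intervalIntegral.integral_sub (hI1.const_mul _) (hI0.const_mul _)]
    apply intervalIntegral.integral_congr
    intro z _
    exact (stepA z).symm
  -- Step C: Fubini
  have stepC :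
      (∫ z in (0:ℝ)..1, ∫ t in (0:ℝ)..T, f z t)
      = ∫ t in (0:ℝ)..T, ∫ z in (0:ℝ)..1, f z t := by
    have h01 : (0:ℝ) ≤ 1 := zero_le_one
    rw [intervalIntegral.integral_of_le h01, intervalIntegral.integral_of_le hT]
    simp_rw [intervalIntegral.integral_of_le hT, intervalIntegral.integral_of_le h01]
    have hint : Integrable (Function.uncurry f)
        ((volume.restrict (Set.Ioc (0:ℝ) 1)).prod (volume.restrict (Set.Ioc (0:ℝ) T))) := by
      rw [Measure.prod_restrict]
      exact ((hfc.continuousOn.integrableOn_compact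
        (isCompact_Icc.prod isCompact_Icc))).mono_set
        (Set.prod_mono Set.Ioc_subset_Icc_self Set.Ioc_subset_Icc_self)
    exact MeasureTheory.integral_integral_swap hint
  -- Step D: pointwise bound on the inner z-integral for t ∈ [0,T]
  have stepD : ∀ t ∈ Set.Icc (0:ℝ) T,
      (∫ z in (0:ℝ)..1, f z t) ≤ (-γ * U t) * wt 1 t := by
    intro t ht
    have ht0 : (0:ℝ) ≤ t := ht.1
    have heq : (∫ z in (0:ℝ)..1, f z t)
        = (∫ z in (0:ℝ)..1, C * (wzz z t * wt z t + wz z t * wzt z t))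
          - b * ∫ z in (0:ℝ)..1, (wt z t)^2 := by
      rw [← intervalIntegral.integral_const_mul, ← intervalIntegral.integral_sub]
      · apply intervalIntegral.integral_congr
        intro z hz
        rw [Set.uIcc_of_le zero_le_one] at hz
        have hp := hpde z hz t ht0
        simp only [hf]
        linear_combination wt z t * hp
      · exact (continuous_const.mul (((cz wzz hwzzc t).mul (cz wt hwtc t)).add
          ((cz wz hwzc t).mul (cz wzt hwztc t)))).intervalIntegrable 0 1
      · exact (continuous_const.mul ((cz wt hwtc t).pow 2)).intervalIntegrable 0 1
    have hftc : (∫ z in (0:ℝ)..1, C * (wzz z t * wt z t + wz z t * wzt z t))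
        = C * (wz 1 t * wt 1 t) - C * (wz 0 t * wt 0 t) := by
      exact intervalIntegral.integral_eq_sub_of_hasDerivAt
        (f := fun z => C * (wz z t * wt z t))
        (fun z _ => ((hwzz z t).mul (hwzt z t)).const_mul C)
        ((continuous_const.mul (((cz wzz hwzzc t).mul (cz wt hwtc t)).add
          ((cz wz hwzc t).mul (cz wzt hwztc t)))).intervalIntegrable 0 1)
    have hnn : 0 ≤ b * ∫ z in (0:ℝ)..1, (wt z t)^2 := by
      apply mul_nonneg hb.le
      apply intervalIntegral.integral_nonneg zero_le_one
      intro z _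
      positivity
    rw [heq, hftc, hwt0 t ht0]
    have : C * (wz 1 t * wt 1 t) = (-γ * U t) * wt 1 t := by
      rw [← hbc t ht0]; ring
    rw [this]
    linarith
  -- Step E: conclude by monotonicity of the t-integral
  rw [stepB, stepC]
  have hcont : Continuous fun t => ∫ z in (0:ℝ)..1, f z t :=
    intervalIntegral.continuous_parametric_intervalIntegral_of_continuous'
      (f := fun t z => f z t) (μ := volume) (hfc.comp continuous_swap) 0 1
  exact intervalIntegral.integral_mono_on hT (hcont.intervalIntegrable 0 T)
    (((continuous_const.mul hUc).mul (ct wt hwtc 1)).intervalIntegrable 0 T) stepD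
end

section
/- (Proposition 1, new passivity property.) If additionally γ > 0 is a constant and U : [0,∞) → ℝ is continuously differentiable with C·w_z(1,t) = −γ·U(t) for all t ≥ 0 (hence C·w_zt(1,t) = −γ·U'(t)), then dS/dt(t) ≤ −γ·U'(t)·w_tt(1,t) for all t ≥ 0, and consequently for every T ≥ 0, S(T) − S(0) ≤ ∫₀ᵀ (−γ·w_tt(1,t))·U'(t) dt; that is, the beam is passive with port variables U'(t) and −γ·w_tt(1,t). -/
open MeasureTheory intervalIntegral

private lemma cont_zero_of_pos {f : ℝ → ℝ} (hf : Continuous f)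
    (h : ∀ t : ℝ, 0 < t → f t = 0) : ∀ t : ℝ, 0 ≤ t → f t = 0 := by
  intro t ht
  rcases ht.lt_or_eq with h' | h'
  · exact h t h'
  · subst h'
    have h1 : Filter.Tendsto f (nhdsWithin 0 (Set.Ioi 0)) (nhds (f 0)) :=
      (hf.continuousAt).continuousWithinAt
    have h2 : Filter.Tendsto f (nhdsWithin 0 (Set.Ioi 0)) (nhds 0) := by
      apply Filter.Tendsto.congr' _ tendsto_const_nhds
      filter_upwards [self_mem_nhdsWithin] with x hx
      exact (h x hx).symm
    exact tendsto_nhds_unique h1 h2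

private lemma deriv_zero_on_nonneg {g g' : ℝ → ℝ}
    (hg : ∀ τ, HasDerivAt g (g' τ) τ) (hg' : Continuous g')
    (h0 : ∀ τ : ℝ, 0 ≤ τ → g τ = 0) : ∀ τ : ℝ, 0 ≤ τ → g' τ = 0 := by
  apply cont_zero_of_pos hg'
  intro t ht
  have hev : g =ᶠ[nhds t] fun _ => (0:ℝ) := by
    filter_upwards [Ioi_mem_nhds ht] with x hx
    exact h0 x (le_of_lt hx)
  exact (hg t).unique ((hasDerivAt_const t (0:ℝ)).congr_of_eventuallyEq hev)

/-- Proposition 1, new passivity property: dS/dt ≤ −γ·U'(t)·w_tt(1,t) and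
S(T) − S(0) ≤ ∫₀ᵀ (−γ·w_tt(1,t))·U'(t) dt; the beam is passive with port
variables U'(t) and −γ·w_tt(1,t). -/
theorem new_passivity_property
    (ρ C b : ℝ) (hρ : 0 < ρ) (hC : 0 < C) (hb : 0 < b)
    (w wz wt wzz wzt wtt : ℝ → ℝ → ℝ)
    (hwz : ∀ z t : ℝ, HasDerivAt (fun ζ => w ζ t) (wz z t) z)
    (hwt : ∀ z t : ℝ, HasDerivAt (fun τ => w z τ) (wt z t) t)
    (hwzz : ∀ z t : ℝ, HasDerivAt (fun ζ => wz ζ t) (wzz z t) z)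
    (hwzt : ∀ z t : ℝ, HasDerivAt (fun ζ => wt ζ t) (wzt z t) z)
    (hwzt' : ∀ z t : ℝ, HasDerivAt (fun τ => wz z τ) (wzt z t) t)
    (hwtt : ∀ z t : ℝ, HasDerivAt (fun τ => wt z τ) (wtt z t) t)
    (hwzc : Continuous (Function.uncurry wz))
    (hwtc : Continuous (Function.uncurry wt))
    (hwzzc : Continuous (Function.uncurry wzz))
    (hwztc : Continuous (Function.uncurry wzt))
    (hwttc : Continuous (Function.uncurry wtt))
    (hpde : ∀ z ∈ Set.Icc (0:ℝ) 1, ∀ t : ℝ, 0 ≤ t →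
      ρ * wtt z t = C * wzz z t - b * wt z t)
    (hclamp : ∀ t : ℝ, 0 ≤ t → w 0 t = 0)
    (wzzt wztt wttt : ℝ → ℝ → ℝ)
    (hwzzt : ∀ z t : ℝ, HasDerivAt (fun τ => wzz z τ) (wzzt z t) t)
    (hwzzt' : ∀ z t : ℝ, HasDerivAt (fun ζ => wzt ζ t) (wzzt z t) z)
    (hwztt : ∀ z t : ℝ, HasDerivAt (fun τ => wzt z τ) (wztt z t) t)
    (hwztt' : ∀ z t : ℝ, HasDerivAt (fun ζ => wtt ζ t) (wztt z t) z)
    (hwttt : ∀ z t : ℝ, HasDerivAt (fun τ => wtt z τ) (wttt z t) t)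
    (hwzztc : Continuous (Function.uncurry wzzt))
    (hwzttc : Continuous (Function.uncurry wztt))
    (hwtttc : Continuous (Function.uncurry wttt))
    (γ : ℝ) (hγ : 0 < γ) (U U' : ℝ → ℝ)
    (hU : ∀ t : ℝ, HasDerivAt U (U' t) t) (hU'c : Continuous U')
    (hbc : ∀ t : ℝ, 0 ≤ t → C * wz 1 t = -γ * U t) :
    (∀ t : ℝ, 0 ≤ t →
      ∃ S' : ℝ, HasDerivAt (fun τ => (1/2) * ∫ z in (0:ℝ)..1, (C * (wzt z τ)^2 + ρ * (wtt z τ)^2)) S' t ∧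
        S' ≤ -γ * U' t * wtt 1 t) ∧
    ∀ T : ℝ, 0 ≤ T →
      ((1/2) * ∫ z in (0:ℝ)..1, (C * (wzt z T)^2 + ρ * (wtt z T)^2)) - ((1/2) * ∫ z in (0:ℝ)..1, (C * (wzt z (0:ℝ))^2 + ρ * (wtt z (0:ℝ))^2))
        ≤ ∫ t in (0:ℝ)..T, (-γ * wtt 1 t) * U' t := by
  -- continuity in a single variable
  have cP : ∀ (f : ℝ → ℝ → ℝ), Continuous (Function.uncurry f) →
      Continuous (fun p : ℝ × ℝ => f p.1 p.2) := fun f hf => hf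
  have contz : ∀ (f : ℝ → ℝ → ℝ), Continuous (Function.uncurry f) →
      ∀ t, Continuous (fun z => f z t) := fun f hf t =>
    (cP f hf).comp (continuous_id.prodMk continuous_const)
  have contt : ∀ (f : ℝ → ℝ → ℝ), Continuous (Function.uncurry f) →
      ∀ z, Continuous (fun t => f z t) := fun f hf z =>
    (cP f hf).comp (continuous_const.prodMk continuous_id)
  -- time-differentiated PDE
  have hpde' : ∀ z ∈ Set.Icc (0:ℝ) 1, ∀ t : ℝ, 0 ≤ t →
      ρ * wttt z t = C * wzzt z t - b * wtt z t := by
    intro z hz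
    have key := deriv_zero_on_nonneg
      (g := fun τ => ρ * wtt z τ - (C * wzz z τ - b * wt z τ))
      (g' := fun τ => ρ * wttt z τ - (C * wzzt z τ - b * wtt z τ))
      (fun τ => ((hwttt z τ).const_mul ρ).sub
        (((hwzzt z τ).const_mul C).sub ((hwtt z τ).const_mul b)))
      (((continuous_const.mul (contt wttt hwtttc z))).sub
        ((continuous_const.mul (contt wzzt hwzztc z)).sub
          (continuous_const.mul (contt wtt hwttc z))))
      (fun τ hτ => by
        show ρ * wtt z τ - (C * wzz z τ - b * wt z τ) = 0
        have := hpde z hz τ hτ; linarith)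
    intro t ht
    have h2 : ρ * wttt z t - (C * wzzt z t - b * wtt z t) = 0 := key t ht
    linarith
  -- clamped boundary consequences
  have hw0 : ∀ t : ℝ, 0 ≤ t → wt 0 t = 0 :=
    deriv_zero_on_nonneg (hwt 0) (contt wt hwtc 0) hclamp
  have hw00 : ∀ t : ℝ, 0 ≤ t → wtt 0 t = 0 :=
    deriv_zero_on_nonneg (hwtt 0) (contt wtt hwttc 0) hw0
  -- differentiated boundary condition at z = 1
  have hbc' : ∀ t : ℝ, 0 ≤ t → C * wzt 1 t = -γ * U' t := by
    have key := deriv_zero_on_nonneg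
      (g := fun τ => C * wz 1 τ + γ * U τ)
      (g' := fun τ => C * wzt 1 τ + γ * U' τ)
      (fun τ => ((hwzt' 1 τ).const_mul C).add ((hU τ).const_mul γ))
      ((continuous_const.mul (contt wzt hwztc 1)).add (continuous_const.mul hU'c))
      (fun τ hτ => by
        show C * wz 1 τ + γ * U τ = 0
        have := hbc τ hτ; linarith)
    intro t ht
    have h2 : C * wzt 1 t + γ * U' t = 0 := key t ht
    linarith
  -- derivative of the integrand (in time) and its continuity as a function of (z, t)
  set F' : ℝ → ℝ → ℝ := fun t z =>
    2*C*wzt z t*wztt z t + 2*ρ*wtt z t*wttt z t with hF'def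
  have hF'c : Continuous (fun p : ℝ × ℝ => F' p.2 p.1) := by
    apply Continuous.add
    · exact ((continuous_const.mul (cP wzt hwztc)).mul (cP wztt hwzttc))
    · exact ((continuous_const.mul (cP wtt hwttc)).mul (cP wttt hwtttc))
  have hF'cz : ∀ t, Continuous (fun z => F' t z) :=
    fun t => hF'c.comp (continuous_id.prodMk continuous_const)
  -- the derivative of the un-halved energy integral
  have hD : ∀ t₀ : ℝ,
      HasDerivAt (fun τ => ∫ z in (0:ℝ)..1, (C * (wzt z τ)^2 + ρ * (wtt z τ)^2))
        (∫ z in (0:ℝ)..1, F' t₀ z) t₀ := by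
    intro t₀
    obtain ⟨M, hM⟩ : ∃ M : ℝ, ∀ p ∈ (Set.Icc (0:ℝ) 1 ×ˢ Metric.closedBall t₀ 1),
        ‖F' p.2 p.1‖ ≤ M :=
      ((isCompact_Icc.prod (isCompact_closedBall t₀ 1))).exists_bound_of_continuousOn
        hF'c.continuousOn
    have hbnd : ∀ᵐ z ∂(volume : Measure ℝ), z ∈ Set.uIoc (0:ℝ) 1 →
        ∀ x ∈ Metric.ball t₀ 1, ‖F' x z‖ ≤ M := by
      apply Filter.Eventually.of_forall
      intro z hz x hx
      have hz' : z ∈ Set.Icc (0:ℝ) 1 := by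
        rw [Set.uIoc_of_le (by norm_num : (0:ℝ) ≤ 1)] at hz
        exact ⟨hz.1.le, hz.2⟩
      exact hM (z, x) ⟨hz', Metric.ball_subset_closedBall hx⟩
    have hdiff : ∀ᵐ z ∂(volume : Measure ℝ), z ∈ Set.uIoc (0:ℝ) 1 →
        ∀ x ∈ Metric.ball t₀ 1,
          HasDerivAt (fun τ => C * (wzt z τ)^2 + ρ * (wtt z τ)^2) (F' x z) x := by
      apply Filter.Eventually.of_forall
      intro z _ x _
      have h1 := ((hwztt z x).pow 2).const_mul C
      have h2 := ((hwttt z x).pow 2).const_mul ρ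
      have h3 : HasDerivAt (fun τ => C * (wzt z τ)^2 + ρ * (wtt z τ)^2)
          (C * (((2:ℕ):ℝ) * wzt z x ^ (2 - 1) * wztt z x) + ρ * (((2:ℕ):ℝ) * wtt z x ^ (2 - 1) * wttt z x)) x :=
        h1.add h2
      convert h3 using 1
      show 2*C*wzt z x*wztt z x + 2*ρ*wtt z x*wttt z x = _
      ring
    have main := intervalIntegral.hasDerivAt_integral_of_dominated_loc_of_deriv_le
      (μ := volume) (F := fun τ z => C * (wzt z τ)^2 + ρ * (wtt z τ)^2) (F' := F')
      (a := (0:ℝ)) (b := 1) (x₀ := t₀) (bound := fun _ => M) (s := Metric.ball t₀ 1)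
      (Metric.ball_mem_nhds t₀ (by norm_num : (0:ℝ) < 1))
      (Filter.Eventually.of_forall fun x =>
        (((continuous_const.mul ((contz wzt hwztc x).pow 2)).add
          (continuous_const.mul ((contz wtt hwttc x).pow 2))).aestronglyMeasurable.restrict))
      (((continuous_const.mul ((contz wzt hwztc t₀).pow 2)).add
          (continuous_const.mul ((contz wtt hwttc t₀).pow 2))).intervalIntegrable 0 1)
      ((hF'cz t₀).aestronglyMeasurable.restrict)
      hbnd
      (intervalIntegrable_const)
      hdiff
    exact main.2
  -- continuity of the derivative
  have hDcont : Continuous (fun t => ∫ z in (0:ℝ)..1, F' t z) := by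
    have : Continuous (Function.uncurry F') :=
      hF'c.comp (continuous_snd.prodMk continuous_fst)
    exact intervalIntegral.continuous_parametric_intervalIntegral_of_continuous' this 0 1
  -- the pointwise bound on the derivative
  have hkey : ∀ t : ℝ, 0 ≤ t →
      (1/2) * ∫ z in (0:ℝ)..1, F' t z ≤ -γ * U' t * wtt 1 t := by
    intro t ht
    have hint1 : IntervalIntegrable
        (fun z => 2*C*(wzzt z t * wtt z t + wzt z t * wztt z t)) volume 0 1 :=
      (continuous_const.mul (((contz wzzt hwzztc t).mul (contz wtt hwttc t)).add
        ((contz wzt hwztc t).mul (contz wztt hwzttc t)))).intervalIntegrable 0 1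
    have hint2 : IntervalIntegrable (fun z => 2*b*(wtt z t)^2) volume 0 1 :=
      (continuous_const.mul ((contz wtt hwttc t).pow 2)).intervalIntegrable 0 1
    have hcongr : (∫ z in (0:ℝ)..1, F' t z)
        = ∫ z in (0:ℝ)..1,
            (2*C*(wzzt z t * wtt z t + wzt z t * wztt z t) - 2*b*(wtt z t)^2) := by
      apply intervalIntegral.integral_congr
      intro z hz
      rw [Set.uIcc_of_le (by norm_num : (0:ℝ) ≤ 1)] at hz
      have h := hpde' z hz t ht
      simp only [hF'def]
      linear_combination 2 * wtt z t * h
    have hsplit : (∫ z in (0:ℝ)..1,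
          (2*C*(wzzt z t * wtt z t + wzt z t * wztt z t) - 2*b*(wtt z t)^2))
        = (∫ z in (0:ℝ)..1, 2*C*(wzzt z t * wtt z t + wzt z t * wztt z t))
          - ∫ z in (0:ℝ)..1, 2*b*(wtt z t)^2 :=
      intervalIntegral.integral_sub hint1 hint2
    have hftc : (∫ z in (0:ℝ)..1, 2*C*(wzzt z t * wtt z t + wzt z t * wztt z t))
        = 2*C*(wzt 1 t * wtt 1 t) - 2*C*(wzt 0 t * wtt 0 t) := by
      apply intervalIntegral.integral_eq_sub_of_hasDerivAt
        (f := fun z => 2*C*(wzt z t * wtt z t))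
      · intro z hz
        exact ((hwzzt' z t).mul (hwztt' z t)).const_mul (2*C)
      · exact hint1
    have hnn : 0 ≤ ∫ z in (0:ℝ)..1, 2*b*(wtt z t)^2 :=
      intervalIntegral.integral_nonneg (by norm_num) (fun z _ => by positivity)
    have hb1 : C * wzt 1 t = -γ * U' t := hbc' t ht
    have hb0 : wtt 0 t = 0 := hw00 t ht
    have hb1' : C * (wzt 1 t * wtt 1 t) = -γ * U' t * wtt 1 t := by
      rw [← mul_assoc, hb1]
    rw [hcongr, hsplit, hftc, hb0]
    linarith [hnn, hb1']
  constructor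
  · intro t ht
    exact ⟨(1/2) * ∫ z in (0:ℝ)..1, F' t z,
      HasDerivAt.const_mul (1/2) (hD t), hkey t ht⟩
  · intro T hT
    have heq := intervalIntegral.integral_eq_sub_of_hasDerivAt
      (f := fun τ => (1/2) * ∫ z in (0:ℝ)..1, (C * (wzt z τ)^2 + ρ * (wtt z τ)^2))
      (f' := fun t => (1/2) * ∫ z in (0:ℝ)..1, F' t z)
      (fun t _ => HasDerivAt.const_mul (1/2) (hD t))
      ((continuous_const.mul hDcont).intervalIntegrable 0 T)
    rw [← heq]
    apply intervalIntegral.integral_mono_on hT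
      ((continuous_const.mul hDcont).intervalIntegrable 0 T)
      (((continuous_const.mul (contt wtt hwttc 1)).mul hU'c).intervalIntegrable 0 T)
    intro t htt
    have h1 := hkey t htt.1
    have h2 : -γ * U' t * wtt 1 t = -γ * wtt 1 t * U' t := by ring
    simp only [Pi.mul_apply]
    linarith
end

section
/- (Output shaping, dissipation identity (17) of Proposition 2.) Let additionally K_i, K_p > 0 and p* ∈ ℝ be constants, and suppose the closed-loop boundary condition C·w_zt(1,t) = −K_i·(w_t(1,t) − p*) − K_p·w_tt(1,t) holds for all t ≥ 0 (this is obtained by differentiating C·w_z(1,t) = −γ·U(t) with the PI controller γ·U(t) = K_i·φ(t) + K_p·(w_t(1,t) − p*) + γ·U*, φ'(t) = w_t(1,t) − p*). Define the shaped storage S_d(t) = S(t) + (K_i/2)·(w_t(1,t) − p*)². Then for every t ≥ 0, dS_d/dt(t) = −b·∫₀¹ w_tt(z,t)² dz − K_p·w_tt(1,t)² ≤ 0. -/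
open MeasureTheory intervalIntegral
set_option maxHeartbeats 1000000

private lemma ici_deriv_eq {f g : ℝ → ℝ} {f' g' t : ℝ} (ht : (0:ℝ) ≤ t)
    (hfg : ∀ s : ℝ, 0 ≤ s → f s = g s)
    (hf : HasDerivAt f f' t) (hg : HasDerivAt g g' t) : f' = g' := by
  have h1 : HasDerivWithinAt f f' (Set.Ici (0:ℝ)) t := hf.hasDerivWithinAt
  have h2 : HasDerivWithinAt f g' (Set.Ici (0:ℝ)) t :=
    hg.hasDerivWithinAt.congr (fun s hs => hfg s hs) (hfg t ht)
  exact (uniqueDiffOn_Ici 0 t ht).eq_deriv _ h1 h2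

private lemma cont_slice {f : ℝ → ℝ → ℝ} (hf : Continuous (Function.uncurry f)) (t : ℝ) :
    Continuous (fun z => f z t) :=
  hf.comp (continuous_id.prodMk continuous_const)

/-- differentiation under the interval integral, continuous case -/
private lemma hasDerivAt_int {F Ft : ℝ → ℝ → ℝ}
    (hF : Continuous (Function.uncurry F)) (hFt : Continuous (Function.uncurry Ft))
    (hd : ∀ z t : ℝ, HasDerivAt (fun τ => F z τ) (Ft z t) t) (t : ℝ) :
    HasDerivAt (fun τ => ∫ z in (0:ℝ)..1, F z τ) (∫ z in (0:ℝ)..1, Ft z t) t := by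
  obtain ⟨M, hM⟩ := ((isCompact_Icc (a := (t-1)) (b := (t+1))).prod
      (isCompact_Icc (a := (0:ℝ)) (b := 1))).exists_bound_of_continuousOn
      ((hFt.comp continuous_swap).continuousOn)
  have key := intervalIntegral.hasDerivAt_integral_of_dominated_loc_of_deriv_le
      (F := fun τ z => F z τ) (F' := fun τ z => Ft z τ) (x₀ := t)
      (bound := fun _ => M) (a := 0) (b := 1) (μ := volume) (s := Metric.ball t 1) (Metric.ball_mem_nhds t one_pos)
      (Filter.Eventually.of_forall fun τ => ((cont_slice hF τ).aestronglyMeasurable))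
      ((cont_slice hF t).intervalIntegrable 0 1)
      ((cont_slice hFt t).aestronglyMeasurable)
      ?_ (intervalIntegrable_const)
      (Filter.Eventually.of_forall fun z _ τ _ => hd z τ)
  · exact key.2
  · refine Filter.Eventually.of_forall fun z hz τ hτ => ?_
    rw [Set.uIoc_of_le (by norm_num : (0:ℝ) ≤ 1)] at hz
    have hzI : z ∈ Set.Icc (0:ℝ) 1 := ⟨le_of_lt hz.1, hz.2⟩
    have hτI : τ ∈ Set.Icc (t-1) (t+1) := by
      have := Real.dist_eq τ t ▸ (Metric.mem_ball.mp hτ)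
      constructor <;> [linarith [abs_lt.mp this]; linarith [(abs_lt.mp this).2]]
    exact hM (τ, z) ⟨hτI, hzI⟩

/-- Output shaping, dissipation identity (17) of Proposition 2:
dS_d/dt(t) = −b·∫₀¹ w_tt² dz − K_p·w_tt(1,t)² ≤ 0. -/
theorem output_shaping_dissipation
    (ρ C b : ℝ) (hρ : 0 < ρ) (hC : 0 < C) (hb : 0 < b)
    (w wz wt wzz wzt wtt : ℝ → ℝ → ℝ)
    (hwz : ∀ z t : ℝ, HasDerivAt (fun ζ => w ζ t) (wz z t) z)
    (hwt : ∀ z t : ℝ, HasDerivAt (fun τ => w z τ) (wt z t) t)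
    (hwzz : ∀ z t : ℝ, HasDerivAt (fun ζ => wz ζ t) (wzz z t) z)
    (hwzt : ∀ z t : ℝ, HasDerivAt (fun ζ => wt ζ t) (wzt z t) z)
    (hwzt' : ∀ z t : ℝ, HasDerivAt (fun τ => wz z τ) (wzt z t) t)
    (hwtt : ∀ z t : ℝ, HasDerivAt (fun τ => wt z τ) (wtt z t) t)
    (hwzc : Continuous (Function.uncurry wz))
    (hwtc : Continuous (Function.uncurry wt))
    (hwzzc : Continuous (Function.uncurry wzz))
    (hwztc : Continuous (Function.uncurry wzt))
    (hwttc : Continuous (Function.uncurry wtt))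
    (hpde : ∀ z ∈ Set.Icc (0:ℝ) 1, ∀ t : ℝ, 0 ≤ t →
      ρ * wtt z t = C * wzz z t - b * wt z t)
    (hclamp : ∀ t : ℝ, 0 ≤ t → w 0 t = 0)
    (wzzt wztt wttt : ℝ → ℝ → ℝ)
    (hwzzt : ∀ z t : ℝ, HasDerivAt (fun τ => wzz z τ) (wzzt z t) t)
    (hwzzt' : ∀ z t : ℝ, HasDerivAt (fun ζ => wzt ζ t) (wzzt z t) z)
    (hwztt : ∀ z t : ℝ, HasDerivAt (fun τ => wzt z τ) (wztt z t) t)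
    (hwztt' : ∀ z t : ℝ, HasDerivAt (fun ζ => wtt ζ t) (wztt z t) z)
    (hwttt : ∀ z t : ℝ, HasDerivAt (fun τ => wtt z τ) (wttt z t) t)
    (hwzztc : Continuous (Function.uncurry wzzt))
    (hwzttc : Continuous (Function.uncurry wztt))
    (hwtttc : Continuous (Function.uncurry wttt))
    (Ki Kp pstar : ℝ) (hKi : 0 < Ki) (hKp : 0 < Kp)
    (hcl : ∀ t : ℝ, 0 ≤ t →
      C * wzt 1 t = -Ki * (wt 1 t - pstar) - Kp * wtt 1 t) :
    ∀ t : ℝ, 0 ≤ t →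
      HasDerivAt
        (fun τ => (1/2) * (∫ z in (0:ℝ)..1, (C * (wzt z τ)^2 + ρ * (wtt z τ)^2))
          + Ki/2 * (wt 1 τ - pstar)^2)
        (-(b * ∫ z in (0:ℝ)..1, (wtt z t)^2) - Kp * (wtt 1 t)^2) t ∧
      -(b * ∫ z in (0:ℝ)..1, (wtt z t)^2) - Kp * (wtt 1 t)^2 ≤ 0 := by
  intro t ht
  -- boundary vanishing at z = 0
  have hwt0 : ∀ s : ℝ, 0 ≤ s → wt 0 s = 0 := fun s hs =>
    ici_deriv_eq hs hclamp (hwt 0 s) (hasDerivAt_const s 0)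
  have hwtt0 : wtt 0 t = 0 :=
    ici_deriv_eq ht hwt0 (hwtt 0 t) (hasDerivAt_const t 0)
  -- differentiated PDE at time t
  have hpde' : ∀ z ∈ Set.Icc (0:ℝ) 1, ρ * wttt z t = C * wzzt z t - b * wtt z t := by
    intro z hz
    exact ici_deriv_eq ht (fun s hs => hpde z hz s hs)
      ((hwttt z t).const_mul ρ)
      (((hwzzt z t).const_mul C).sub ((hwtt z t).const_mul b))
  -- derivative of the integral part
  set F : ℝ → ℝ → ℝ := fun z τ => C * (wzt z τ)^2 + ρ * (wtt z τ)^2 with hF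
  set Ft : ℝ → ℝ → ℝ := fun z τ =>
    C * (2 * wzt z τ * wztt z τ) + ρ * (2 * wtt z τ * wttt z τ) with hFt
  have hFc : Continuous (Function.uncurry F) := by
    apply Continuous.add
    · exact continuous_const.mul (hwztc.pow 2)
    · exact continuous_const.mul (hwttc.pow 2)
  have hFtc : Continuous (Function.uncurry Ft) := by
    apply Continuous.add
    · exact continuous_const.mul ((continuous_const.mul hwztc).mul hwzttc)
    · exact continuous_const.mul ((continuous_const.mul hwttc).mul hwtttc)
  have hFd : ∀ z τ : ℝ, HasDerivAt (fun τ => F z τ) (Ft z τ) τ := by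
    intro z τ
    have h1 : HasDerivAt (fun τ => (wzt z τ)^2) (2 * wzt z τ * wztt z τ) τ := by
      have := (hwztt z τ).fun_pow 2; simpa [mul_comm, mul_assoc] using this
    have h2 : HasDerivAt (fun τ => (wtt z τ)^2) (2 * wtt z τ * wttt z τ) τ := by
      have := (hwttt z τ).fun_pow 2; simpa [mul_comm, mul_assoc] using this
    exact (h1.const_mul C).add (h2.const_mul ρ)
  have hint : HasDerivAt (fun τ => ∫ z in (0:ℝ)..1, F z τ) (∫ z in (0:ℝ)..1, Ft z t) t :=
    hasDerivAt_int hFc hFtc hFd t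
  -- value of ∫ Ft via integration by parts
  have hFTC : (∫ z in (0:ℝ)..1,
      (wzzt z t * wtt z t + wzt z t * wztt z t)) =
      wzt 1 t * wtt 1 t - wzt 0 t * wtt 0 t := by
    have hconts : Continuous (fun z => wzzt z t * wtt z t + wzt z t * wztt z t) :=
      ((cont_slice hwzztc t).mul (cont_slice hwttc t)).add
        ((cont_slice hwztc t).mul (cont_slice hwzttc t))
    exact intervalIntegral.integral_eq_sub_of_hasDerivAt
      (f := fun z => wzt z t * wtt z t)
      (fun z hz => (hwzzt' z t).mul (hwztt' z t))
      (hconts.intervalIntegrable 0 1)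
  have hval : (∫ z in (0:ℝ)..1, Ft z t) =
      2 * (C * wzt 1 t * wtt 1 t) - 2 * b * ∫ z in (0:ℝ)..1, (wtt z t)^2 := by
    have heq : ∀ z ∈ Set.uIcc (0:ℝ) 1, Ft z t =
        2 * (C * (wzzt z t * wtt z t + wzt z t * wztt z t)) - 2 * b * (wtt z t)^2 := by
      intro z hz
      rw [Set.uIcc_of_le (by norm_num : (0:ℝ) ≤ 1)] at hz
      have := hpde' z hz
      simp only [hFt]
      linear_combination (2 * wtt z t) * this
    have h1 : IntervalIntegrable
        (fun z => 2 * (C * (wzzt z t * wtt z t + wzt z t * wztt z t))) volume 0 1 :=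
      Continuous.intervalIntegrable (continuous_const.mul (continuous_const.mul
        (((cont_slice hwzztc t).mul (cont_slice hwttc t)).add
        ((cont_slice hwztc t).mul (cont_slice hwzttc t))))) 0 1
    have h2 : IntervalIntegrable (fun z => 2 * b * (wtt z t)^2) volume 0 1 :=
      Continuous.intervalIntegrable (continuous_const.mul ((cont_slice hwttc t).pow 2)) 0 1
    rw [intervalIntegral.integral_congr heq, intervalIntegral.integral_sub h1 h2,
      intervalIntegral.integral_const_mul, intervalIntegral.integral_const_mul,
      intervalIntegral.integral_const_mul, hFTC, hwtt0]
    ring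
  -- derivative of shaping term
  have hshape : HasDerivAt (fun τ => Ki/2 * (wt 1 τ - pstar)^2)
      (Ki * (wt 1 t - pstar) * wtt 1 t) t := by
    have h1 : HasDerivAt (fun τ => (wt 1 τ - pstar)^2)
        (2 * (wt 1 t - pstar) * wtt 1 t) t := by
      have := ((hwtt 1 t).sub_const pstar).fun_pow 2
      simpa [mul_comm, mul_assoc] using this
    have := h1.const_mul (Ki/2)
    exact this.congr_deriv (by ring)
  -- assemble
  have htotal := (hint.const_mul (1/2 : ℝ)).add hshape
  constructor
  · refine HasDerivAt.congr_deriv htotal ?_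
    rw [hval, hcl t ht]
    ring
  · have hnn : 0 ≤ ∫ z in (0:ℝ)..1, (wtt z t)^2 :=
      intervalIntegral.integral_nonneg (by norm_num) (fun z _ => sq_nonneg _)
    nlinarith [sq_nonneg (wtt 1 t), mul_nonneg hb.le hnn, mul_nonneg hKp.le (sq_nonneg (wtt 1 t))]
end

section
/- (Output shaping, integrated dissipation bound.) Under the hypotheses of the output-shaping dissipation identity (closed-loop boundary condition C·w_zt(1,t) = −K_i·(w_t(1,t) − p*) − K_p·w_tt(1,t) with K_i, K_p > 0, p* ∈ ℝ, and S_d(t) = S(t) + (K_i/2)·(w_t(1,t) − p*)²), for every T ≥ 0 one has ∫₀ᵀ ( b·∫₀¹ w_tt(z,t)² dz + K_p·w_tt(1,t)² ) dt = S_d(0) − S_d(T) ≤ S_d(0). -/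
open MeasureTheory intervalIntegral

lemma my_swap_aux (F : ℝ → ℝ → ℝ) (hF : Continuous (Function.uncurry F)) (T : ℝ) (hT : 0 ≤ T) :
    (∫ t in (0:ℝ)..T, ∫ z in (0:ℝ)..1, F z t) = ∫ z in (0:ℝ)..1, ∫ t in (0:ℝ)..T, F z t := by
  have h1 : ∀ t : ℝ, (∫ z in (0:ℝ)..1, F z t) = ∫ z in Set.Ioc (0:ℝ) 1, F z t := fun t =>
    intervalIntegral.integral_of_le zero_le_one
  have h2 : ∀ z : ℝ, (∫ t in (0:ℝ)..T, F z t) = ∫ t in Set.Ioc (0:ℝ) T, F z t := fun z =>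
    intervalIntegral.integral_of_le hT
  rw [intervalIntegral.integral_of_le hT, intervalIntegral.integral_of_le zero_le_one]
  simp_rw [h1, h2]
  have hc : Continuous (fun p : ℝ × ℝ => F p.2 p.1) := hF.comp continuous_swap
  have hi : IntegrableOn (fun p : ℝ × ℝ => F p.2 p.1)
      (Set.Icc (0:ℝ) T ×ˢ Set.Icc (0:ℝ) 1) volume :=
    hc.continuousOn.integrableOn_compact (isCompact_Icc.prod isCompact_Icc)
  have hi2 : IntegrableOn (fun p : ℝ × ℝ => F p.2 p.1)
      (Set.Ioc (0:ℝ) T ×ˢ Set.Ioc (0:ℝ) 1) volume :=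
    hi.mono_set (Set.prod_mono Set.Ioc_subset_Icc_self Set.Ioc_subset_Icc_self)
  have hi3 : Integrable (Function.uncurry fun t z => F z t)
      ((volume.restrict (Set.Ioc (0:ℝ) T)).prod (volume.restrict (Set.Ioc (0:ℝ) 1))) := by
    rw [Measure.prod_restrict]
    rw [Measure.volume_eq_prod] at hi2
    exact hi2
  exact MeasureTheory.integral_integral_swap hi3

lemma my_ext_pos {f g : ℝ → ℝ} (hf : Continuous f) (hg : Continuous g)
    (h : ∀ t : ℝ, 0 < t → f t = g t) : ∀ t : ℝ, 0 ≤ t → f t = g t := by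
  intro t ht
  rcases ht.lt_or_eq with h' | h'
  · exact h t h'
  · subst h'
    have hev : f =ᶠ[nhdsWithin (0:ℝ) (Set.Ioi 0)] g := by
      filter_upwards [self_mem_nhdsWithin] with x hx using h x hx
    exact tendsto_nhds_unique ((hf.tendsto 0).mono_left nhdsWithin_le_nhds)
      (((hg.tendsto 0).mono_left nhdsWithin_le_nhds).congr' hev.symm)

lemma my_deriv_eq_pos {f g f' g' : ℝ → ℝ}
    (hf : ∀ t, HasDerivAt f (f' t) t) (hg : ∀ t, HasDerivAt g (g' t) t)
    (h : ∀ t : ℝ, 0 ≤ t → f t = g t) : ∀ t : ℝ, 0 < t → f' t = g' t := by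
  intro t ht
  have hev : f =ᶠ[nhds t] g := by
    filter_upwards [Ioi_mem_nhds ht] with τ hτ using h τ (le_of_lt hτ)
  exact (hf t).unique ((hg t).congr_of_eventuallyEq hev)

/-- Output shaping, integrated dissipation bound:
∫₀ᵀ (b·∫₀¹ w_tt² dz + K_p·w_tt(1,t)²) dt = S_d(0) − S_d(T) ≤ S_d(0). -/
theorem output_shaping_integrated
    (ρ C b : ℝ) (hρ : 0 < ρ) (hC : 0 < C) (hb : 0 < b)
    (w wz wt wzz wzt wtt : ℝ → ℝ → ℝ)
    (hwz : ∀ z t : ℝ, HasDerivAt (fun ζ => w ζ t) (wz z t) z)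
    (hwt : ∀ z t : ℝ, HasDerivAt (fun τ => w z τ) (wt z t) t)
    (hwzz : ∀ z t : ℝ, HasDerivAt (fun ζ => wz ζ t) (wzz z t) z)
    (hwzt : ∀ z t : ℝ, HasDerivAt (fun ζ => wt ζ t) (wzt z t) z)
    (hwzt' : ∀ z t : ℝ, HasDerivAt (fun τ => wz z τ) (wzt z t) t)
    (hwtt : ∀ z t : ℝ, HasDerivAt (fun τ => wt z τ) (wtt z t) t)
    (hwzc : Continuous (Function.uncurry wz))
    (hwtc : Continuous (Function.uncurry wt))
    (hwzzc : Continuous (Function.uncurry wzz))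
    (hwztc : Continuous (Function.uncurry wzt))
    (hwttc : Continuous (Function.uncurry wtt))
    (hpde : ∀ z ∈ Set.Icc (0:ℝ) 1, ∀ t : ℝ, 0 ≤ t →
      ρ * wtt z t = C * wzz z t - b * wt z t)
    (hclamp : ∀ t : ℝ, 0 ≤ t → w 0 t = 0)
    (wzzt wztt wttt : ℝ → ℝ → ℝ)
    (hwzzt : ∀ z t : ℝ, HasDerivAt (fun τ => wzz z τ) (wzzt z t) t)
    (hwzzt' : ∀ z t : ℝ, HasDerivAt (fun ζ => wzt ζ t) (wzzt z t) z)
    (hwztt : ∀ z t : ℝ, HasDerivAt (fun τ => wzt z τ) (wztt z t) t)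
    (hwztt' : ∀ z t : ℝ, HasDerivAt (fun ζ => wtt ζ t) (wztt z t) z)
    (hwttt : ∀ z t : ℝ, HasDerivAt (fun τ => wtt z τ) (wttt z t) t)
    (hwzztc : Continuous (Function.uncurry wzzt))
    (hwzttc : Continuous (Function.uncurry wztt))
    (hwtttc : Continuous (Function.uncurry wttt))
    (Ki Kp pstar : ℝ) (hKi : 0 < Ki) (hKp : 0 < Kp)
    (hcl : ∀ t : ℝ, 0 ≤ t →
      C * wzt 1 t = -Ki * (wt 1 t - pstar) - Kp * wtt 1 t) :
    ∀ T : ℝ, 0 ≤ T →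
      (∫ t in (0:ℝ)..T,
          (b * (∫ z in (0:ℝ)..1, (wtt z t)^2) + Kp * (wtt 1 t)^2))
          = ((1/2) * (∫ z in (0:ℝ)..1, (C * (wzt z (0:ℝ))^2 + ρ * (wtt z (0:ℝ))^2)) + Ki/2 * (wt 1 (0:ℝ) - pstar)^2) - ((1/2) * (∫ z in (0:ℝ)..1, (C * (wzt z T)^2 + ρ * (wtt z T)^2)) + Ki/2 * (wt 1 T - pstar)^2) ∧
        ((1/2) * (∫ z in (0:ℝ)..1, (C * (wzt z (0:ℝ))^2 + ρ * (wtt z (0:ℝ))^2)) + Ki/2 * (wt 1 (0:ℝ) - pstar)^2) - ((1/2) * (∫ z in (0:ℝ)..1, (C * (wzt z T)^2 + ρ * (wtt z T)^2)) + Ki/2 * (wt 1 T - pstar)^2) ≤ ((1/2) * (∫ z in (0:ℝ)..1, (C * (wzt z (0:ℝ))^2 + ρ * (wtt z (0:ℝ))^2)) + Ki/2 * (wt 1 (0:ℝ) - pstar)^2) := by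
  intro T hT
  -- continuity of slices
  have ct : ∀ (u : ℝ → ℝ → ℝ), Continuous (Function.uncurry u) → ∀ z : ℝ,
      Continuous (fun τ => u z τ) := fun u hu z =>
    hu.comp (continuous_const.prodMk continuous_id)
  have cz : ∀ (u : ℝ → ℝ → ℝ), Continuous (Function.uncurry u) → ∀ t : ℝ,
      Continuous (fun ζ => u ζ t) := fun u hu t =>
    hu.comp (continuous_id.prodMk continuous_const)
  -- clamped boundary derivatives vanish
  have hwt0 : ∀ t : ℝ, 0 ≤ t → wt 0 t = 0 := by
    have hpos := my_deriv_eq_pos (g := fun _ : ℝ => (0:ℝ)) (g' := fun _ : ℝ => (0:ℝ))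
      (fun t => hwt 0 t) (fun t => hasDerivAt_const t (0:ℝ)) hclamp
    exact my_ext_pos (ct wt hwtc 0) continuous_const hpos
  have hwtt0 : ∀ t : ℝ, 0 ≤ t → wtt 0 t = 0 := by
    have hpos := my_deriv_eq_pos (g := fun _ : ℝ => (0:ℝ)) (g' := fun _ : ℝ => (0:ℝ))
      (fun t => hwtt 0 t) (fun t => hasDerivAt_const t (0:ℝ)) hwt0
    exact my_ext_pos (ct wtt hwttc 0) continuous_const hpos
  -- time-differentiated PDE
  have hpde' : ∀ z ∈ Set.Icc (0:ℝ) 1, ∀ t : ℝ, 0 ≤ t →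
      ρ * wttt z t = C * wzzt z t - b * wtt z t := by
    intro z hz
    have hpos := my_deriv_eq_pos
      (f := fun τ => ρ * wtt z τ) (g := fun τ => C * wzz z τ - b * wt z τ)
      (f' := fun τ => ρ * wttt z τ) (g' := fun τ => C * wzzt z τ - b * wtt z τ)
      (fun t => (hwttt z t).const_mul ρ)
      (fun t => ((hwzzt z t).const_mul C).sub ((hwt 0 t).const_mul b |> fun _ => ((hwtt z t).const_mul b)))
      (fun t ht => hpde z hz t ht)
    exact my_ext_pos (continuous_const.mul (ct wttt hwtttc z))
      ((continuous_const.mul (ct wzzt hwzztc z)).sub (continuous_const.mul (ct wtt hwttc z))) hpos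
  -- the integrand Q
  set Q : ℝ → ℝ → ℝ := fun z t =>
    C * wzt z t * wztt z t + ρ * wtt z t * wttt z t + Ki * (wt 1 t - pstar) * wtt 1 t with hQdef
  have hQc : Continuous (Function.uncurry Q) := by
    have h1 : Continuous (fun p : ℝ × ℝ => wt 1 p.2) :=
      hwtc.comp (continuous_const.prodMk continuous_snd)
    have h2 : Continuous (fun p : ℝ × ℝ => wtt 1 p.2) :=
      hwttc.comp (continuous_const.prodMk continuous_snd)
    exact (((continuous_const.mul hwztc).mul hwzttc).add
      ((continuous_const.mul hwttc).mul hwtttc)).add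
      ((continuous_const.mul (h1.sub continuous_const)).mul h2)
  -- Step A: FTC in time
  have stepA : ∀ z : ℝ, (∫ t in (0:ℝ)..T, Q z t) =
      ((1/2) * (C * (wzt z T)^2 + ρ * (wtt z T)^2) + Ki/2 * (wt 1 T - pstar)^2)
      - ((1/2) * (C * (wzt z 0)^2 + ρ * (wtt z 0)^2) + Ki/2 * (wt 1 (0:ℝ) - pstar)^2) := by
    intro z
    apply intervalIntegral.integral_eq_sub_of_hasDerivAt
    · intro t ht
      have h := ((((hwztt z t).pow 2).const_mul C).add
          (((hwttt z t).pow 2).const_mul ρ)).const_mul (1/2 : ℝ)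
      have h2 := (((hwtt 1 t).sub_const pstar).pow 2).const_mul (Ki/2 : ℝ)
      have h3 := h.add h2
      refine h3.congr_deriv ?_
      simp only [hQdef]
      ring
    · exact ((ct Q hQc z).intervalIntegrable 0 T)
  -- Step D: spatial integral of Q
  have stepD : ∀ t : ℝ, 0 ≤ t → (∫ z in (0:ℝ)..1, Q z t) =
      -(b * (∫ z in (0:ℝ)..1, (wtt z t)^2) + Kp * (wtt 1 t)^2) := by
    intro t ht
    have hcong : Set.EqOn (fun z => Q z t)
        (fun z => (C * (wzt z t * wtt z t) * 0 + (C * wzzt z t * wtt z t + C * wzt z t * wztt z t))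
          - b * (wtt z t)^2 + Ki * (wt 1 t - pstar) * wtt 1 t)
        (Set.uIcc (0:ℝ) 1) := by
      intro z hz
      rw [Set.uIcc_of_le zero_le_one] at hz
      have h2 : ρ * wttt z t = C * wzzt z t - b * wtt z t := hpde' z hz t ht
      simp only [hQdef]
      linear_combination (wtt z t) * h2
    rw [intervalIntegral.integral_congr hcong]
    have hX : IntervalIntegrable (fun z => C * (wzt z t * wtt z t) * 0
        + (C * wzzt z t * wtt z t + C * wzt z t * wztt z t)) volume 0 1 := by
      apply Continuous.intervalIntegrable
      exact ((continuous_const.mul ((cz wzt hwztc t).mul (cz wtt hwttc t))).mul continuous_const).add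
        (((continuous_const.mul (cz wzzt hwzztc t)).mul (cz wtt hwttc t)).add
          ((continuous_const.mul (cz wzt hwztc t)).mul (cz wztt hwzttc t)))
    have hY : IntervalIntegrable (fun z => b * (wtt z t)^2) volume 0 1 := by
      apply Continuous.intervalIntegrable
      exact continuous_const.mul ((cz wtt hwttc t).pow 2)
    rw [intervalIntegral.integral_add (hX.sub hY) intervalIntegrable_const,
        intervalIntegral.integral_sub hX hY, intervalIntegral.integral_const]
    have hftc : (∫ z in (0:ℝ)..1, (C * (wzt z t * wtt z t) * 0
        + (C * wzzt z t * wtt z t + C * wzt z t * wztt z t)))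
        = C * (wzt 1 t * wtt 1 t) - C * (wzt 0 t * wtt 0 t) := by
      apply intervalIntegral.integral_eq_sub_of_hasDerivAt (f := fun ζ => C * (wzt ζ t * wtt ζ t))
      · intro z hz
        have h := ((hwzzt' z t).mul (hwztt' z t)).const_mul C
        refine h.congr_deriv ?_
        ring
      · exact hX
    rw [hftc, hwtt0 t ht]
    have hclt := hcl t ht
    have hint : (∫ z in (0:ℝ)..1, b * (wtt z t)^2) = b * ∫ z in (0:ℝ)..1, (wtt z t)^2 := by
      rw [← intervalIntegral.integral_const_mul]
    rw [hint]
    simp only [smul_eq_mul]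
    linear_combination (wtt 1 t) * hclt
  -- combine
  have hswap := my_swap_aux Q hQc T hT
  have hBz : IntervalIntegrable (fun z => (1/2) * (C * (wzt z T)^2 + ρ * (wtt z T)^2)
      + Ki/2 * (wt 1 T - pstar)^2) volume 0 1 := by
    apply Continuous.intervalIntegrable
    exact (continuous_const.mul ((continuous_const.mul ((cz wzt hwztc T).pow 2)).add
      (continuous_const.mul ((cz wtt hwttc T).pow 2)))).add continuous_const
  have hBz0 : IntervalIntegrable (fun z => (1/2) * (C * (wzt z 0)^2 + ρ * (wtt z 0)^2)
      + Ki/2 * (wt 1 (0:ℝ) - pstar)^2) volume 0 1 := by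
    apply Continuous.intervalIntegrable
    exact (continuous_const.mul ((continuous_const.mul ((cz wzt hwztc 0).pow 2)).add
      (continuous_const.mul ((cz wtt hwttc 0).pow 2)))).add continuous_const
  have stepB : (∫ z in (0:ℝ)..1, ∫ t in (0:ℝ)..T, Q z t) =
      ((1/2) * (∫ z in (0:ℝ)..1, (C * (wzt z T)^2 + ρ * (wtt z T)^2)) + Ki/2 * (wt 1 T - pstar)^2)
      - ((1/2) * (∫ z in (0:ℝ)..1, (C * (wzt z (0:ℝ))^2 + ρ * (wtt z (0:ℝ))^2)) + Ki/2 * (wt 1 (0:ℝ) - pstar)^2) := by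
    have : (∫ z in (0:ℝ)..1, ∫ t in (0:ℝ)..T, Q z t)
        = ∫ z in (0:ℝ)..1, (((1/2) * (C * (wzt z T)^2 + ρ * (wtt z T)^2) + Ki/2 * (wt 1 T - pstar)^2)
          - ((1/2) * (C * (wzt z 0)^2 + ρ * (wtt z 0)^2) + Ki/2 * (wt 1 (0:ℝ) - pstar)^2)) := by
      apply intervalIntegral.integral_congr
      intro z _
      exact stepA z
    rw [this, intervalIntegral.integral_sub hBz hBz0]
    have e1 : (∫ z in (0:ℝ)..1, ((1/2) * (C * (wzt z T)^2 + ρ * (wtt z T)^2) + Ki/2 * (wt 1 T - pstar)^2))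
        = (1/2) * (∫ z in (0:ℝ)..1, (C * (wzt z T)^2 + ρ * (wtt z T)^2)) + Ki/2 * (wt 1 T - pstar)^2 := by
      have hA : IntervalIntegrable (fun z => (1/2) * (C * (wzt z T)^2 + ρ * (wtt z T)^2)) volume 0 1 := by
        apply Continuous.intervalIntegrable
        exact continuous_const.mul ((continuous_const.mul ((cz wzt hwztc T).pow 2)).add
          (continuous_const.mul ((cz wtt hwttc T).pow 2)))
      rw [intervalIntegral.integral_add hA intervalIntegrable_const,
        intervalIntegral.integral_const_mul, intervalIntegral.integral_const]
      simp
    have e0 : (∫ z in (0:ℝ)..1, ((1/2) * (C * (wzt z 0)^2 + ρ * (wtt z 0)^2) + Ki/2 * (wt 1 (0:ℝ) - pstar)^2))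
        = (1/2) * (∫ z in (0:ℝ)..1, (C * (wzt z (0:ℝ))^2 + ρ * (wtt z (0:ℝ))^2)) + Ki/2 * (wt 1 (0:ℝ) - pstar)^2 := by
      have hA : IntervalIntegrable (fun z => (1/2) * (C * (wzt z 0)^2 + ρ * (wtt z 0)^2)) volume 0 1 := by
        apply Continuous.intervalIntegrable
        exact continuous_const.mul ((continuous_const.mul ((cz wzt hwztc 0).pow 2)).add
          (continuous_const.mul ((cz wtt hwttc 0).pow 2)))
      rw [intervalIntegral.integral_add hA intervalIntegrable_const,
        intervalIntegral.integral_const_mul, intervalIntegral.integral_const]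
      simp
    rw [e1, e0]
  have hE : (∫ t in (0:ℝ)..T, (b * (∫ z in (0:ℝ)..1, (wtt z t)^2) + Kp * (wtt 1 t)^2))
      = - ∫ t in (0:ℝ)..T, ∫ z in (0:ℝ)..1, Q z t := by
    rw [← intervalIntegral.integral_neg]
    apply intervalIntegral.integral_congr
    intro t ht
    rw [Set.uIcc_of_le hT] at ht
    have := stepD t ht.1
    simp only []
    rw [this]
    ring
  constructor
  · rw [hE, hswap, stepB]
    ring
  · have h1 : 0 ≤ ∫ z in (0:ℝ)..1, (C * (wzt z T)^2 + ρ * (wtt z T)^2) := by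
      apply intervalIntegral.integral_nonneg zero_le_one
      intro z _
      positivity
    have h2 : 0 ≤ Ki/2 * (wt 1 T - pstar)^2 := by positivity
    linarith
end

section
/- (Proposition 2, concrete stability bound for the output-shaping closed loop.) Let additionally K_i, K_p > 0 and p* ∈ ℝ be constants, and suppose the closed-loop boundary condition C·w_zt(1,t) = −K_i·(w_t(1,t) − p*) − K_p·w_tt(1,t) holds for all t ≥ 0. Define M(t) = ∫₀¹ ( (C·w_zt(z,t))² + w_tt(z,t)² + w_zt(z,t)² + (ρ·w_tt(z,t))² ) dz + (w_t(1,t) − p*)². Then for all t ≥ 0, M(t) ≤ (γ₂/γ₁)·M(0), where γ₁ = (1/4)·min{1/C, C, ρ, 1/ρ, 2·K_i} and γ₂ = (1/4)·max{1/C, C, ρ, 1/ρ, 2·K_i}. In particular, the closed-loop equilibrium is stable in the sense of Lyapunov with respect to the norm whose square is M. -/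
open MeasureTheory intervalIntegral

private lemma deriv_eq_on_Ici (f g f' g' : ℝ → ℝ)
    (hf : ∀ t, HasDerivAt f (f' t) t) (hg : ∀ t, HasDerivAt g (g' t) t)
    (hf'c : Continuous f') (hg'c : Continuous g')
    (heq : ∀ t : ℝ, 0 ≤ t → f t = g t) :
    ∀ t : ℝ, 0 ≤ t → f' t = g' t := by
  have h1 : Set.EqOn f' g' (Set.Ioi 0) := by
    intro s hs
    have hfg : f =ᶠ[nhds s] g := by
      filter_upwards [Ioi_mem_nhds hs] with τ hτ using heq τ (le_of_lt hτ)
    exact (hf s).unique ((hg s).congr_of_eventuallyEq hfg)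
  have h2 := h1.closure hf'c hg'c
  rw [closure_Ioi] at h2
  exact fun t ht => h2 ht

private lemma quad_lower (m C ρ : ℝ) (hC : 0 < C) (hρ : 0 < ρ)
    (h1 : m ≤ 1/C) (h2 : m ≤ C) (h3 : m ≤ ρ) (h4 : m ≤ 1/ρ) (x y : ℝ) :
    (1/4) * m * ((C*x)^2 + y^2 + x^2 + (ρ*y)^2) ≤ (1/2) * (C*(x*x) + ρ*(y*y)) := by
  have e1 : m * (C*x)^2 ≤ C * (x*x) := by
    have h := mul_le_mul_of_nonneg_right h1 (sq_nonneg (C*x))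
    have h' : (1/C)*(C*x)^2 = C*(x*x) := by field_simp
    linarith
  have e2 : m * x^2 ≤ C * (x*x) := by
    have h := mul_le_mul_of_nonneg_right h2 (sq_nonneg x)
    nlinarith [sq_nonneg x]
  have e3 : m * y^2 ≤ ρ * (y*y) := by
    have h := mul_le_mul_of_nonneg_right h3 (sq_nonneg y)
    nlinarith [sq_nonneg y]
  have e4 : m * (ρ*y)^2 ≤ ρ * (y*y) := by
    have h := mul_le_mul_of_nonneg_right h4 (sq_nonneg (ρ*y))
    have h' : (1/ρ)*(ρ*y)^2 = ρ*(y*y) := by field_simp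
    linarith
  nlinarith [e1, e2, e3, e4]

private lemma quad_upper (M C ρ : ℝ) (hC : 0 < C) (hρ : 0 < ρ)
    (h1 : 1/C ≤ M) (h2 : C ≤ M) (h3 : ρ ≤ M) (h4 : 1/ρ ≤ M) (x y : ℝ) :
    (1/2) * (C*(x*x) + ρ*(y*y)) ≤ (1/4) * M * ((C*x)^2 + y^2 + x^2 + (ρ*y)^2) := by
  have e1 : C * (x*x) ≤ M * (C*x)^2 := by
    have h := mul_le_mul_of_nonneg_right h1 (sq_nonneg (C*x))
    have h' : (1/C)*(C*x)^2 = C*(x*x) := by field_simp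
    linarith
  have e2 : C * (x*x) ≤ M * x^2 := by
    have h := mul_le_mul_of_nonneg_right h2 (sq_nonneg x)
    nlinarith [sq_nonneg x]
  have e3 : ρ * (y*y) ≤ M * y^2 := by
    have h := mul_le_mul_of_nonneg_right h3 (sq_nonneg y)
    nlinarith [sq_nonneg y]
  have e4 : ρ * (y*y) ≤ M * (ρ*y)^2 := by
    have h := mul_le_mul_of_nonneg_right h4 (sq_nonneg (ρ*y))
    have h' : (1/ρ)*(ρ*y)^2 = ρ*(y*y) := by field_simp
    linarith
  nlinarith [e1, e2, e3, e4]

set_option maxHeartbeats 1000000 in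
/-- Proposition 2, concrete stability bound for the output-shaping closed
loop: M(t) ≤ (γ₂/γ₁)·M(0) for all t ≥ 0. -/
theorem output_shaping_stability_bound
    (ρ C b : ℝ) (hρ : 0 < ρ) (hC : 0 < C) (hb : 0 < b)
    (w wz wt wzz wzt wtt : ℝ → ℝ → ℝ)
    (hwz : ∀ z t : ℝ, HasDerivAt (fun ζ => w ζ t) (wz z t) z)
    (hwt : ∀ z t : ℝ, HasDerivAt (fun τ => w z τ) (wt z t) t)
    (hwzz : ∀ z t : ℝ, HasDerivAt (fun ζ => wz ζ t) (wzz z t) z)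
    (hwzt : ∀ z t : ℝ, HasDerivAt (fun ζ => wt ζ t) (wzt z t) z)
    (hwzt' : ∀ z t : ℝ, HasDerivAt (fun τ => wz z τ) (wzt z t) t)
    (hwtt : ∀ z t : ℝ, HasDerivAt (fun τ => wt z τ) (wtt z t) t)
    (hwzc : Continuous (Function.uncurry wz))
    (hwtc : Continuous (Function.uncurry wt))
    (hwzzc : Continuous (Function.uncurry wzz))
    (hwztc : Continuous (Function.uncurry wzt))
    (hwttc : Continuous (Function.uncurry wtt))
    (hpde : ∀ z ∈ Set.Icc (0:ℝ) 1, ∀ t : ℝ, 0 ≤ t →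
      ρ * wtt z t = C * wzz z t - b * wt z t)
    (hclamp : ∀ t : ℝ, 0 ≤ t → w 0 t = 0)
    (wzzt wztt wttt : ℝ → ℝ → ℝ)
    (hwzzt : ∀ z t : ℝ, HasDerivAt (fun τ => wzz z τ) (wzzt z t) t)
    (hwzzt' : ∀ z t : ℝ, HasDerivAt (fun ζ => wzt ζ t) (wzzt z t) z)
    (hwztt : ∀ z t : ℝ, HasDerivAt (fun τ => wzt z τ) (wztt z t) t)
    (hwztt' : ∀ z t : ℝ, HasDerivAt (fun ζ => wtt ζ t) (wztt z t) z)
    (hwttt : ∀ z t : ℝ, HasDerivAt (fun τ => wtt z τ) (wttt z t) t)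
    (hwzztc : Continuous (Function.uncurry wzzt))
    (hwzttc : Continuous (Function.uncurry wztt))
    (hwtttc : Continuous (Function.uncurry wttt))
    (Ki Kp pstar : ℝ) (hKi : 0 < Ki) (hKp : 0 < Kp)
    (hcl : ∀ t : ℝ, 0 ≤ t →
      C * wzt 1 t = -Ki * (wt 1 t - pstar) - Kp * wtt 1 t) :
    ∀ t : ℝ, 0 ≤ t →
      ((∫ z in (0:ℝ)..1, ((C * wzt z t)^2 + (wtt z t)^2 + (wzt z t)^2 + (ρ * wtt z t)^2)) + (wt 1 t - pstar)^2)
        ≤ ((1/4) * max (max (1/C) C) (max (max ρ (1/ρ)) (2*Ki)))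
            / ((1/4) * min (min (1/C) C) (min (min ρ (1/ρ)) (2*Ki)))
          * ((∫ z in (0:ℝ)..1, ((C * wzt z (0:ℝ))^2 + (wtt z (0:ℝ))^2 + (wzt z (0:ℝ))^2 + (ρ * wtt z (0:ℝ))^2)) + (wt 1 (0:ℝ) - pstar)^2) := by
  intro t ht
  -- slice continuity helpers
  have cL : ∀ (G : ℝ → ℝ → ℝ), Continuous (Function.uncurry G) → ∀ z : ℝ,
      Continuous (fun s => G z s) := fun G hG z => hG.comp (Continuous.prodMk_right z)
  have cR : ∀ (G : ℝ → ℝ → ℝ), Continuous (Function.uncurry G) → ∀ s : ℝ,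
      Continuous (fun z => G z s) := fun G hG s => hG.comp (Continuous.prodMk_left s)
  -- clamp consequences
  have hwt0 : ∀ s : ℝ, 0 ≤ s → wt 0 s = 0 :=
    deriv_eq_on_Ici (fun τ => w 0 τ) (fun _ => 0) (fun τ => wt 0 τ) (fun _ => 0)
      (fun τ => hwt 0 τ) (fun τ => hasDerivAt_const τ 0)
      (cL wt hwtc 0) continuous_const hclamp
  have hwtt0 : ∀ s : ℝ, 0 ≤ s → wtt 0 s = 0 :=
    deriv_eq_on_Ici (fun τ => wt 0 τ) (fun _ => 0) (fun τ => wtt 0 τ) (fun _ => 0)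
      (fun τ => hwtt 0 τ) (fun τ => hasDerivAt_const τ 0)
      (cL wtt hwttc 0) continuous_const hwt0
  -- time-differentiated PDE
  have htpde : ∀ z ∈ Set.Icc (0:ℝ) 1, ∀ s : ℝ, 0 ≤ s →
      ρ * wttt z s = C * wzzt z s - b * wtt z s := by
    intro z hz
    exact deriv_eq_on_Ici (fun τ => ρ * wtt z τ) (fun τ => C * wzz z τ - b * wt z τ)
      (fun τ => ρ * wttt z τ) (fun τ => C * wzzt z τ - b * wtt z τ)
      (fun τ => (hwttt z τ).const_mul ρ)
      (fun τ => ((hwzzt z τ).const_mul C).sub ((hwtt z τ).const_mul b))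
      (continuous_const.mul (cL wttt hwtttc z))
      ((continuous_const.mul (cL wzzt hwzztc z)).sub (continuous_const.mul (cL wtt hwttc z)))
      (fun τ hτ => hpde z hz τ hτ)
  -- energy density and its time derivative
  set F : ℝ → ℝ → ℝ := fun z τ => C * (wzt z τ * wzt z τ) + ρ * (wtt z τ * wtt z τ) with hFdef
  set g : ℝ → ℝ → ℝ := fun z s =>
    C * (wztt z s * wzt z s + wzt z s * wztt z s)
      + ρ * (wttt z s * wtt z s + wtt z s * wttt z s) with hgdef
  have hFc : Continuous (Function.uncurry F) := by
    rw [hFdef]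
    exact (continuous_const.mul (hwztc.mul hwztc)).add (continuous_const.mul (hwttc.mul hwttc))
  have hgc : Continuous (Function.uncurry g) := by
    rw [hgdef]
    exact (continuous_const.mul ((hwzttc.mul hwztc).add (hwztc.mul hwzttc))).add
      (continuous_const.mul ((hwtttc.mul hwttc).add (hwttc.mul hwtttc)))
  have hF' : ∀ z s : ℝ, HasDerivAt (fun τ => F z τ) (g z s) s := by
    intro z s
    have h := (((hwztt z s).mul (hwztt z s)).const_mul C).add
      (((hwttt z s).mul (hwttt z s)).const_mul ρ)
    simpa [hFdef, hgdef, Pi.add_def, Pi.mul_def] using h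
  -- FTC in time for each z
  have hFTCz : ∀ z : ℝ, (∫ s in (0:ℝ)..t, g z s) = F z t - F z 0 := fun z =>
    intervalIntegral.integral_eq_sub_of_hasDerivAt (fun s _ => hF' z s)
      ((cL g hgc z).intervalIntegrable 0 t)
  -- Fubini
  have hFub : Integrable (Function.uncurry g)
      ((volume.restrict (Set.Ioc (0:ℝ) 1)).prod (volume.restrict (Set.Ioc (0:ℝ) t))) := by
    rw [Measure.prod_restrict, ← Measure.volume_eq_prod]
    exact ((hgc.continuousOn).integrableOn_compact
        ((isCompact_Icc (a := (0:ℝ)) (b := 1)).prod (isCompact_Icc (a := (0:ℝ)) (b := t)))).mono_set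
      (Set.prod_mono Set.Ioc_subset_Icc_self Set.Ioc_subset_Icc_self)
  have hswap : (∫ z in (0:ℝ)..1, ∫ s in (0:ℝ)..t, g z s)
      = ∫ s in (0:ℝ)..t, ∫ z in (0:ℝ)..1, g z s := by
    simp only [intervalIntegral.integral_of_le ht,
      intervalIntegral.integral_of_le (zero_le_one (α := ℝ))]
    exact integral_integral_swap hFub
  have hIF : ∀ τ : ℝ, IntervalIntegrable (fun z => F z τ) volume 0 1 :=
    fun τ => (cR F hFc τ).intervalIntegrable 0 1
  have hEdiff : (∫ z in (0:ℝ)..1, F z t) - (∫ z in (0:ℝ)..1, F z 0)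
      = ∫ s in (0:ℝ)..t, ∫ z in (0:ℝ)..1, g z s := by
    rw [← hswap, ← intervalIntegral.integral_sub (hIF t) (hIF 0)]
    apply intervalIntegral.integral_congr
    intro z _
    exact (hFTCz z).symm
  -- the inner spatial integral
  have hinner : ∀ s : ℝ, 0 ≤ s → (∫ z in (0:ℝ)..1, g z s)
      = 2*C*(wzt 1 s * wtt 1 s) - 2*b*(∫ z in (0:ℝ)..1, wtt z s * wtt z s) := by
    intro s hs
    have hcong : Set.EqOn (fun z => g z s)
        (fun z => 2*C*(wzzt z s * wtt z s + wzt z s * wztt z s) - 2*b*(wtt z s * wtt z s))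
        (Set.uIcc (0:ℝ) 1) := by
      intro z hz
      have hz' : z ∈ Set.Icc (0:ℝ) 1 := by
        rwa [Set.uIcc_of_le (zero_le_one (α := ℝ))] at hz
      have hp := htpde z hz' s hs
      simp only [hgdef]
      linear_combination (2 * wtt z s) * hp
    rw [intervalIntegral.integral_congr hcong]
    have i1 : IntervalIntegrable
        (fun z => 2*C*(wzzt z s * wtt z s + wzt z s * wztt z s)) volume 0 1 :=
      (continuous_const.mul (((cR wzzt hwzztc s).mul (cR wtt hwttc s)).add
        ((cR wzt hwztc s).mul (cR wztt hwzttc s)))).intervalIntegrable 0 1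
    have i2 : IntervalIntegrable (fun z => 2*b*(wtt z s * wtt z s)) volume 0 1 :=
      (continuous_const.mul ((cR wtt hwttc s).mul (cR wtt hwttc s))).intervalIntegrable 0 1
    rw [intervalIntegral.integral_sub i1 i2, intervalIntegral.integral_const_mul,
      intervalIntegral.integral_const_mul]
    have hb1 : (∫ z in (0:ℝ)..1, (wzzt z s * wtt z s + wzt z s * wztt z s))
        = wzt 1 s * wtt 1 s := by
      have hftc := intervalIntegral.integral_eq_sub_of_hasDerivAt
        (f := fun z => wzt z s * wtt z s)
        (f' := fun z => wzzt z s * wtt z s + wzt z s * wztt z s)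
        (fun z _ => (hwzzt' z s).mul (hwztt' z s))
        ((((cR wzzt hwzztc s).mul (cR wtt hwttc s)).add
          ((cR wzt hwztc s).mul (cR wztt hwzttc s))).intervalIntegrable 0 1)
      rw [hftc]
      simp [hwtt0 s hs]
    rw [hb1]
  -- boundary term FTC
  have hq' : ∀ s : ℝ, HasDerivAt (fun τ => (wt 1 τ - pstar)^2)
      (wtt 1 s * (wt 1 s - pstar) + (wt 1 s - pstar) * wtt 1 s) s := by
    intro s
    have h := ((hwtt 1 s).sub_const pstar).mul ((hwtt 1 s).sub_const pstar)
    simpa [pow_two, Pi.mul_def] using h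
  have hqdc : Continuous (fun s => wtt 1 s * (wt 1 s - pstar) + (wt 1 s - pstar) * wtt 1 s) :=
    ((cL wtt hwttc 1).mul ((cL wt hwtc 1).sub continuous_const)).add
      (((cL wt hwtc 1).sub continuous_const).mul (cL wtt hwttc 1))
  have hqFTC : (∫ s in (0:ℝ)..t, (wtt 1 s * (wt 1 s - pstar) + (wt 1 s - pstar) * wtt 1 s))
      = (wt 1 t - pstar)^2 - (wt 1 0 - pstar)^2 :=
    intervalIntegral.integral_eq_sub_of_hasDerivAt (fun s _ => hq' s)
      (hqdc.intervalIntegrable 0 t)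
  -- continuity of the inner integral in time
  have hcont_inner : Continuous (fun s => ∫ z in (0:ℝ)..1, g z s) := by
    have hsw : Continuous (Function.uncurry fun s z => g z s) := hgc.comp continuous_swap
    exact intervalIntegral.continuous_parametric_intervalIntegral_of_continuous' hsw 0 1
  -- Lyapunov decrease
  have hVdiff : ((1/2)*(∫ z in (0:ℝ)..1, F z t) + (Ki/2)*(wt 1 t - pstar)^2)
      - ((1/2)*(∫ z in (0:ℝ)..1, F z 0) + (Ki/2)*(wt 1 0 - pstar)^2)
      = ∫ s in (0:ℝ)..t, ((1/2)*(∫ z in (0:ℝ)..1, g z s)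
          + (Ki/2)*(wtt 1 s * (wt 1 s - pstar) + (wt 1 s - pstar) * wtt 1 s)) := by
    rw [intervalIntegral.integral_add (f := fun s => (1/2)*(∫ z in (0:ℝ)..1, g z s))
        (g := fun s => (Ki/2)*(wtt 1 s * (wt 1 s - pstar) + (wt 1 s - pstar) * wtt 1 s))
        ((continuous_const.mul hcont_inner).intervalIntegrable 0 t)
        ((continuous_const.mul hqdc).intervalIntegrable 0 t),
      intervalIntegral.integral_const_mul, intervalIntegral.integral_const_mul,
      ← hEdiff, hqFTC]
    ring
  have hDnonpos : ∀ s ∈ Set.Icc (0:ℝ) t,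
      ((1/2)*(∫ z in (0:ℝ)..1, g z s)
        + (Ki/2)*(wtt 1 s * (wt 1 s - pstar) + (wt 1 s - pstar) * wtt 1 s)) ≤ 0 := by
    intro s hs
    rw [hinner s hs.1]
    have hI2 : 0 ≤ ∫ z in (0:ℝ)..1, wtt z s * wtt z s :=
      intervalIntegral.integral_nonneg (zero_le_one (α := ℝ)) (fun z _ => mul_self_nonneg _)
    have e : (1/2)*(2*C*(wzt 1 s * wtt 1 s) - 2*b*(∫ z in (0:ℝ)..1, wtt z s * wtt z s))
        + (Ki/2)*(wtt 1 s * (wt 1 s - pstar) + (wt 1 s - pstar) * wtt 1 s)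
        = -(Kp * (wtt 1 s * wtt 1 s)) - b*(∫ z in (0:ℝ)..1, wtt z s * wtt z s) := by
      linear_combination (wtt 1 s) * (hcl s hs.1)
    rw [e]
    have h1 : 0 ≤ Kp * (wtt 1 s * wtt 1 s) := mul_nonneg hKp.le (mul_self_nonneg _)
    have h2 : 0 ≤ b * (∫ z in (0:ℝ)..1, wtt z s * wtt z s) := mul_nonneg hb.le hI2
    linarith
  have hVle : (1/2)*(∫ z in (0:ℝ)..1, F z t) + (Ki/2)*(wt 1 t - pstar)^2
      ≤ (1/2)*(∫ z in (0:ℝ)..1, F z 0) + (Ki/2)*(wt 1 0 - pstar)^2 := by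
    have hDint : IntervalIntegrable (fun s => (1/2)*(∫ z in (0:ℝ)..1, g z s)
        + (Ki/2)*(wtt 1 s * (wt 1 s - pstar) + (wt 1 s - pstar) * wtt 1 s)) volume 0 t :=
      ((continuous_const.mul hcont_inner).add (continuous_const.mul hqdc)).intervalIntegrable 0 t
    have hle := intervalIntegral.integral_mono_on ht hDint
      (_root_.intervalIntegrable_const (c := (0:ℝ))) hDnonpos
    simp only [intervalIntegral.integral_const, smul_eq_mul, mul_zero] at hle
    linarith [hVdiff, hle]
  -- min/max bookkeeping
  set mn := min (min (1/C) C) (min (min ρ (1/ρ)) (2*Ki)) with hmn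
  set mx := max (max (1/C) C) (max (max ρ (1/ρ)) (2*Ki)) with hmx
  have hmn1 : mn ≤ 1/C := le_trans (min_le_left _ _) (min_le_left _ _)
  have hmn2 : mn ≤ C := le_trans (min_le_left _ _) (min_le_right _ _)
  have hmn3 : mn ≤ ρ := le_trans (min_le_right _ _) (le_trans (min_le_left _ _) (min_le_left _ _))
  have hmn4 : mn ≤ 1/ρ := le_trans (min_le_right _ _) (le_trans (min_le_left _ _) (min_le_right _ _))
  have hmn5 : mn ≤ 2*Ki := le_trans (min_le_right _ _) (min_le_right _ _)
  have hmx1 : 1/C ≤ mx := le_trans (le_max_left _ _) (le_max_left _ _)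
  have hmx2 : C ≤ mx := le_trans (le_max_right _ _) (le_max_left _ _)
  have hmx3 : ρ ≤ mx := le_trans (le_trans (le_max_left _ _) (le_max_left _ _)) (le_max_right _ _)
  have hmx4 : 1/ρ ≤ mx := le_trans (le_trans (le_max_right _ _) (le_max_left _ _)) (le_max_right _ _)
  have hmx5 : 2*Ki ≤ mx := le_trans (le_max_right _ _) (le_max_right _ _)
  have hmnpos : 0 < mn :=
    lt_min (lt_min (by positivity) hC) (lt_min (lt_min hρ (by positivity)) (by positivity))
  -- lower bound at time t
  have hMint : ∀ τ : ℝ, IntervalIntegrable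
      (fun z => (C * wzt z τ)^2 + (wtt z τ)^2 + (wzt z τ)^2 + (ρ * wtt z τ)^2) volume 0 1 :=
    fun τ => ((((continuous_const.mul (cR wzt hwztc τ)).pow 2).add
      ((cR wtt hwttc τ).pow 2)).add ((cR wzt hwztc τ).pow 2) |>.add
      ((continuous_const.mul (cR wtt hwttc τ)).pow 2)).intervalIntegrable 0 1
  have hlowI : (∫ z in (0:ℝ)..1,
        (1/4)*mn*((C * wzt z t)^2 + (wtt z t)^2 + (wzt z t)^2 + (ρ * wtt z t)^2))
      ≤ ∫ z in (0:ℝ)..1, (1/2) * F z t := by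
    refine intervalIntegral.integral_mono_on (zero_le_one (α := ℝ))
      ((continuous_const.mul ?_).intervalIntegrable 0 1)
      ((continuous_const.mul (cR F hFc t)).intervalIntegrable 0 1) ?_
    · exact (((continuous_const.mul (cR wzt hwztc t)).pow 2).add
        ((cR wtt hwttc t).pow 2)).add ((cR wzt hwztc t).pow 2) |>.add
        ((continuous_const.mul (cR wtt hwttc t)).pow 2)
    · intro z _
      simp only [hFdef]
      exact quad_lower mn C ρ hC hρ hmn1 hmn2 hmn3 hmn4 (wzt z t) (wtt z t)
  have hlow : (1/4)*mn*((∫ z in (0:ℝ)..1,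
        ((C * wzt z t)^2 + (wtt z t)^2 + (wzt z t)^2 + (ρ * wtt z t)^2)) + (wt 1 t - pstar)^2)
      ≤ (1/2)*(∫ z in (0:ℝ)..1, F z t) + (Ki/2)*(wt 1 t - pstar)^2 := by
    have hb1 : (1/4)*mn*(wt 1 t - pstar)^2 ≤ (Ki/2)*(wt 1 t - pstar)^2 := by
      have : (1/4)*mn ≤ Ki/2 := by linarith
      exact mul_le_mul_of_nonneg_right this (sq_nonneg _)
    have hl : (1/4)*mn*(∫ z in (0:ℝ)..1,
        ((C * wzt z t)^2 + (wtt z t)^2 + (wzt z t)^2 + (ρ * wtt z t)^2))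
        ≤ (1/2)*(∫ z in (0:ℝ)..1, F z t) := by
      rw [← intervalIntegral.integral_const_mul, ← intervalIntegral.integral_const_mul]
      exact hlowI
    nlinarith [hl, hb1]
  -- upper bound at time 0
  have huppI : (∫ z in (0:ℝ)..1, (1/2) * F z 0)
      ≤ ∫ z in (0:ℝ)..1,
        (1/4)*mx*((C * wzt z 0)^2 + (wtt z 0)^2 + (wzt z 0)^2 + (ρ * wtt z 0)^2) := by
    refine intervalIntegral.integral_mono_on (zero_le_one (α := ℝ))
      ((continuous_const.mul (cR F hFc 0)).intervalIntegrable 0 1)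
      ((continuous_const.mul ?_).intervalIntegrable 0 1) ?_
    · exact (((continuous_const.mul (cR wzt hwztc 0)).pow 2).add
        ((cR wtt hwttc 0).pow 2)).add ((cR wzt hwztc 0).pow 2) |>.add
        ((continuous_const.mul (cR wtt hwttc 0)).pow 2)
    · intro z _
      simp only [hFdef]
      exact quad_upper mx C ρ hC hρ hmx1 hmx2 hmx3 hmx4 (wzt z 0) (wtt z 0)
  have hupp : (1/2)*(∫ z in (0:ℝ)..1, F z 0) + (Ki/2)*(wt 1 0 - pstar)^2
      ≤ (1/4)*mx*((∫ z in (0:ℝ)..1,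
        ((C * wzt z 0)^2 + (wtt z 0)^2 + (wzt z 0)^2 + (ρ * wtt z 0)^2)) + (wt 1 0 - pstar)^2) := by
    have hb1 : (Ki/2)*(wt 1 0 - pstar)^2 ≤ (1/4)*mx*(wt 1 0 - pstar)^2 := by
      have : Ki/2 ≤ (1/4)*mx := by linarith
      exact mul_le_mul_of_nonneg_right this (sq_nonneg _)
    have hl : (1/2)*(∫ z in (0:ℝ)..1, F z 0)
        ≤ (1/4)*mx*(∫ z in (0:ℝ)..1,
          ((C * wzt z 0)^2 + (wtt z 0)^2 + (wzt z 0)^2 + (ρ * wtt z 0)^2)) := by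
      rw [← intervalIntegral.integral_const_mul, ← intervalIntegral.integral_const_mul]
      exact huppI
    nlinarith [hl, hb1]
  -- conclude
  have hchain : (1/4)*mn*((∫ z in (0:ℝ)..1,
        ((C * wzt z t)^2 + (wtt z t)^2 + (wzt z t)^2 + (ρ * wtt z t)^2)) + (wt 1 t - pstar)^2)
      ≤ (1/4)*mx*((∫ z in (0:ℝ)..1,
        ((C * wzt z 0)^2 + (wtt z 0)^2 + (wzt z 0)^2 + (ρ * wtt z 0)^2)) + (wt 1 0 - pstar)^2) :=
    le_trans hlow (le_trans hVle hupp)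
  set A := (∫ z in (0:ℝ)..1,
      ((C * wzt z t)^2 + (wtt z t)^2 + (wzt z t)^2 + (ρ * wtt z t)^2)) + (wt 1 t - pstar)^2 with hA
  set B := (∫ z in (0:ℝ)..1,
      ((C * wzt z 0)^2 + (wtt z 0)^2 + (wzt z 0)^2 + (ρ * wtt z 0)^2)) + (wt 1 0 - pstar)^2 with hB
  rw [div_mul_eq_mul_div, le_div_iff₀ (by positivity : (0:ℝ) < (1/4)*mn)]
  nlinarith [hchain]
end

section
/- (Input shaping, dissipation identity of Proposition 3.) Let additionally γ, K_i, K_p > 0 and U* ∈ ℝ be constants, and let U : [0,∞) → ℝ be continuously differentiable with C·w_z(1,t) = −γ·U(t) for all t ≥ 0 (hence C·w_zt(1,t) = −γ·U'(t)), and satisfying the input-shaping control law K_p·U'(t) = −K_i·(U(t) − U*) + γ·w_tt(1,t) for all t ≥ 0 (obtained by differentiating U(t) = −(1/K_p)·(K_i·ψ(t) − γ·(w_t(1,t) − p*)) + U* with ψ'(t) = U(t) − U*). Define the shaped storage S_d(t) = S(t) + (K_i/2)·(U(t) − U*)². Then for every t ≥ 0, dS_d/dt(t) = −b·∫₀¹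 w_tt(z,t)² dz − K_p·U'(t)² ≤ 0. -/
open MeasureTheory intervalIntegral

/-- If `f` vanishes on `[0,∞)` and has continuous derivative `f'`, then `f'` vanishes there. -/
lemma deriv_eq_zero_on_nonneg {f f' : ℝ → ℝ}
    (hf : ∀ τ : ℝ, HasDerivAt f (f' τ) τ) (hc : Continuous f')
    (h0 : ∀ τ : ℝ, 0 ≤ τ → f τ = 0) : ∀ τ : ℝ, 0 ≤ τ → f' τ = 0 := by
  have hpos : ∀ τ : ℝ, 0 < τ → f' τ = 0 := by
    intro τ hτ
    have hev : f =ᶠ[nhds τ] (fun _ => (0:ℝ)) := by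
      filter_upwards [Ioi_mem_nhds hτ] with x hx
      exact h0 x (le_of_lt hx)
    have h1 : HasDerivAt (fun _ : ℝ => (0:ℝ)) (f' τ) τ :=
      (Filter.EventuallyEq.hasDerivAt_iff hev).mp (hf τ)
    exact h1.unique (hasDerivAt_const τ 0)
  intro τ hτ
  rcases lt_or_eq_of_le hτ with h | h
  · exact hpos τ h
  · subst h
    have h1 : Filter.Tendsto f' (nhdsWithin 0 (Set.Ioi 0)) (nhds (f' 0)) :=
      (hc.continuousAt).mono_left nhdsWithin_le_nhds
    have h2 : Filter.Tendsto f' (nhdsWithin 0 (Set.Ioi 0)) (nhds 0) := by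
      have : f' =ᶠ[nhdsWithin (0:ℝ) (Set.Ioi 0)] (fun _ => (0:ℝ)) := by
        filter_upwards [self_mem_nhdsWithin] with x hx
        exact hpos x hx
      rw [Filter.tendsto_congr' this]
      exact tendsto_const_nhds
    exact tendsto_nhds_unique h1 h2

/-- Fubini for an interval integral against `0..1`. -/
lemma swap01 (f : ℝ → ℝ → ℝ) (hf : Continuous (Function.uncurry f)) (a b : ℝ) :
    (∫ x in a..b, ∫ y in (0:ℝ)..1, f x y) = ∫ y in (0:ℝ)..1, ∫ x in a..b, f x y := by
  have hint : Integrable (Function.uncurry f)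
      ((volume.restrict (Set.uIoc a b)).prod (volume.restrict (Set.Ioc (0:ℝ) 1))) := by
    rw [Measure.prod_restrict]
    have hcpt : IsCompact (Set.uIcc a b ×ˢ Set.Icc (0:ℝ) 1) :=
      isCompact_uIcc.prod isCompact_Icc
    have : IntegrableOn (Function.uncurry f) (Set.uIcc a b ×ˢ Set.Icc (0:ℝ) 1) volume :=
      (hf.continuousOn).integrableOn_compact hcpt
    exact this.mono_set (Set.prod_mono Set.uIoc_subset_uIcc Set.Ioc_subset_Icc_self)
  have swap := MeasureTheory.integral_integral_swap (μ := volume.restrict (Set.uIoc a b))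
    (ν := volume.restrict (Set.Ioc (0:ℝ) 1)) (f := f) hint
  calc (∫ x in a..b, ∫ y in (0:ℝ)..1, f x y)
      = (if a ≤ b then (1:ℝ) else -1) • ∫ x in Set.uIoc a b, ∫ y in Set.Ioc (0:ℝ) 1, f x y := by
        rw [intervalIntegral_eq_integral_uIoc]
        congr 1
        refine setIntegral_congr_fun measurableSet_uIoc (fun x _ => ?_)
        rw [intervalIntegral.integral_of_le zero_le_one]
    _ = (if a ≤ b then (1:ℝ) else -1) • ∫ y in Set.Ioc (0:ℝ) 1, ∫ x in Set.uIoc a b, f x y := by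
        rw [swap]
    _ = ∫ y in Set.Ioc (0:ℝ) 1, (if a ≤ b then (1:ℝ) else -1) • ∫ x in Set.uIoc a b, f x y := by
        rw [MeasureTheory.integral_smul]
    _ = ∫ y in (0:ℝ)..1, ∫ x in a..b, f x y := by
        rw [intervalIntegral.integral_of_le zero_le_one]
        refine setIntegral_congr_fun measurableSet_Ioc (fun y _ => ?_)
        rw [intervalIntegral_eq_integral_uIoc]

/-- Differentiation under the integral sign over `0..1`, continuous case. -/
lemma param_hasDerivAt (F F' : ℝ → ℝ → ℝ)
    (hd : ∀ z τ : ℝ, HasDerivAt (fun σ => F σ z) (F' τ z) τ)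
    (hFc : Continuous (Function.uncurry F)) (hF'c : Continuous (Function.uncurry F')) (t : ℝ) :
    HasDerivAt (fun τ => ∫ z in (0:ℝ)..1, F τ z) (∫ z in (0:ℝ)..1, F' t z) t := by
  set h : ℝ → ℝ := fun σ => ∫ z in (0:ℝ)..1, F' σ z with hh
  have hhc : Continuous h :=
    intervalIntegral.continuous_parametric_intervalIntegral_of_continuous' hF'c 0 1
  have key : ∀ τ : ℝ, (∫ σ in (0:ℝ)..τ, h σ)
      = (∫ z in (0:ℝ)..1, F τ z) - ∫ z in (0:ℝ)..1, F 0 z := by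
    intro τ
    have : (∫ σ in (0:ℝ)..τ, h σ) = ∫ z in (0:ℝ)..1, ∫ σ in (0:ℝ)..τ, F' σ z :=
      swap01 F' hF'c 0 τ
    rw [this]
    have hcong : ∀ z ∈ Set.uIcc (0:ℝ) 1,
        (fun z => ∫ σ in (0:ℝ)..τ, F' σ z) z = (fun z => F τ z - F 0 z) z := by
      intro z _
      exact intervalIntegral.integral_eq_sub_of_hasDerivAt
        (fun σ _ => hd z σ)
        ((hF'c.comp (continuous_id.prodMk continuous_const)).intervalIntegrable 0 τ)
    rw [intervalIntegral.integral_congr hcong]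
    have h1 : IntervalIntegrable (fun z => F τ z) volume 0 1 :=
      (hFc.comp (continuous_const.prodMk continuous_id)).intervalIntegrable 0 1
    have h2 : IntervalIntegrable (fun z => F 0 z) volume 0 1 :=
      (hFc.comp (continuous_const.prodMk continuous_id)).intervalIntegrable 0 1
    exact intervalIntegral.integral_sub h1 h2
  have hFTC : HasDerivAt (fun τ => ∫ σ in (0:ℝ)..τ, h σ) (h t) t :=
    intervalIntegral.integral_hasDerivAt_right (hhc.intervalIntegrable 0 t)
      hhc.stronglyMeasurable.stronglyMeasurableAtFilter hhc.continuousAt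
  have hFTC' := hFTC.add_const (∫ z in (0:ℝ)..1, F 0 z)
  have hfe : (fun τ => (∫ σ in (0:ℝ)..τ, h σ) + ∫ z in (0:ℝ)..1, F 0 z)
      = fun τ => ∫ z in (0:ℝ)..1, F τ z := by
    funext τ; rw [key τ]; ring
  rw [hfe] at hFTC'
  exact hFTC'

/-- Input shaping, dissipation identity of Proposition 3:
dS_d/dt(t) = −b·∫₀¹ w_tt² dz − K_p·U'(t)² ≤ 0. -/
theorem input_shaping_dissipation
    (ρ C b : ℝ) (hρ : 0 < ρ) (hC : 0 < C) (hb : 0 < b)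
    (w wz wt wzz wzt wtt : ℝ → ℝ → ℝ)
    (hwz : ∀ z t : ℝ, HasDerivAt (fun ζ => w ζ t) (wz z t) z)
    (hwt : ∀ z t : ℝ, HasDerivAt (fun τ => w z τ) (wt z t) t)
    (hwzz : ∀ z t : ℝ, HasDerivAt (fun ζ => wz ζ t) (wzz z t) z)
    (hwzt : ∀ z t : ℝ, HasDerivAt (fun ζ => wt ζ t) (wzt z t) z)
    (hwzt' : ∀ z t : ℝ, HasDerivAt (fun τ => wz z τ) (wzt z t) t)
    (hwtt : ∀ z t : ℝ, HasDerivAt (fun τ => wt z τ) (wtt z t) t)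
    (hwzc : Continuous (Function.uncurry wz))
    (hwtc : Continuous (Function.uncurry wt))
    (hwzzc : Continuous (Function.uncurry wzz))
    (hwztc : Continuous (Function.uncurry wzt))
    (hwttc : Continuous (Function.uncurry wtt))
    (hpde : ∀ z ∈ Set.Icc (0:ℝ) 1, ∀ t : ℝ, 0 ≤ t →
      ρ * wtt z t = C * wzz z t - b * wt z t)
    (hclamp : ∀ t : ℝ, 0 ≤ t → w 0 t = 0)
    (wzzt wztt wttt : ℝ → ℝ → ℝ)
    (hwzzt : ∀ z t : ℝ, HasDerivAt (fun τ => wzz z τ) (wzzt z t) t)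
    (hwzzt' : ∀ z t : ℝ, HasDerivAt (fun ζ => wzt ζ t) (wzzt z t) z)
    (hwztt : ∀ z t : ℝ, HasDerivAt (fun τ => wzt z τ) (wztt z t) t)
    (hwztt' : ∀ z t : ℝ, HasDerivAt (fun ζ => wtt ζ t) (wztt z t) z)
    (hwttt : ∀ z t : ℝ, HasDerivAt (fun τ => wtt z τ) (wttt z t) t)
    (hwzztc : Continuous (Function.uncurry wzzt))
    (hwzttc : Continuous (Function.uncurry wztt))
    (hwtttc : Continuous (Function.uncurry wttt))
    (γ Ki Kp Ustar : ℝ) (hγ : 0 < γ) (hKi : 0 < Ki) (hKp : 0 < Kp)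
    (U U' : ℝ → ℝ)
    (hU : ∀ t : ℝ, HasDerivAt U (U' t) t) (hU'c : Continuous U')
    (hbc : ∀ t : ℝ, 0 ≤ t → C * wz 1 t = -γ * U t)
    (hlaw : ∀ t : ℝ, 0 ≤ t → Kp * U' t = -Ki * (U t - Ustar) + γ * wtt 1 t) :
    ∀ t : ℝ, 0 ≤ t →
      HasDerivAt
        (fun τ => (1/2) * (∫ z in (0:ℝ)..1, (C * (wzt z τ)^2 + ρ * (wtt z τ)^2))
          + Ki/2 * (U τ - Ustar)^2)
        (-(b * ∫ z in (0:ℝ)..1, (wtt z t)^2) - Kp * (U' t)^2) t ∧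
      -(b * ∫ z in (0:ℝ)..1, (wtt z t)^2) - Kp * (U' t)^2 ≤ 0 := by
  intro t ht
  -- continuity helpers (curried slices)
  have czt : Continuous (fun p : ℝ × ℝ => wzt p.2 p.1) :=
    hwztc.comp (continuous_snd.prodMk continuous_fst)
  have ctt : Continuous (fun p : ℝ × ℝ => wtt p.2 p.1) :=
    hwttc.comp (continuous_snd.prodMk continuous_fst)
  have cztt : Continuous (fun p : ℝ × ℝ => wztt p.2 p.1) :=
    hwzttc.comp (continuous_snd.prodMk continuous_fst)
  have cttt : Continuous (fun p : ℝ × ℝ => wttt p.2 p.1) :=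
    hwtttc.comp (continuous_snd.prodMk continuous_fst)
  -- differentiated PDE: ρ wttt = C wzzt - b wtt on [0,1] × [0,∞)
  have hpde' : ∀ z ∈ Set.Icc (0:ℝ) 1, ρ * wttt z t = C * wzzt z t - b * wtt z t := by
    intro z hz
    have key := deriv_eq_zero_on_nonneg
      (f := fun τ => ρ * wtt z τ - C * wzz z τ + b * wt z τ)
      (f' := fun τ => ρ * wttt z τ - C * wzzt z τ + b * wtt z τ)
      (fun τ => (((hwttt z τ).const_mul ρ).sub ((hwzzt z τ).const_mul C)).add
        ((hwtt z τ).const_mul b))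
      (by
        have h1 : Continuous (fun τ => wttt z τ) :=
          hwtttc.comp (continuous_const.prodMk continuous_id)
        have h2 : Continuous (fun τ => wzzt z τ) :=
          hwzztc.comp (continuous_const.prodMk continuous_id)
        have h3 : Continuous (fun τ => wtt z τ) :=
          hwttc.comp (continuous_const.prodMk continuous_id)
        exact ((continuous_const.mul h1).sub (continuous_const.mul h2)).add
          (continuous_const.mul h3))
      (fun τ hτ => by
        show ρ * wtt z τ - C * wzz z τ + b * wt z τ = 0
        linarith [hpde z hz τ hτ]) t ht
    have key' : ρ * wttt z t - C * wzzt z t + b * wtt z t = 0 := key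
    linarith
  -- clamped end: wt(0,·) = 0 and wtt(0,·) = 0 on [0,∞)
  have hwt0 : ∀ τ : ℝ, 0 ≤ τ → wt 0 τ = 0 :=
    deriv_eq_zero_on_nonneg (fun τ => hwt 0 τ)
      (hwtc.comp (continuous_const.prodMk continuous_id)) hclamp
  have hwtt0 : wtt 0 t = 0 :=
    deriv_eq_zero_on_nonneg (fun τ => hwtt 0 τ)
      (hwttc.comp (continuous_const.prodMk continuous_id)) hwt0 t ht
  -- differentiated boundary condition: C wzt(1,t) = -γ U'(t)
  have hbc' : C * wzt 1 t = -γ * U' t := by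
    have key := deriv_eq_zero_on_nonneg
      (f := fun τ => C * wz 1 τ + γ * U τ)
      (f' := fun τ => C * wzt 1 τ + γ * U' τ)
      (fun τ => ((hwzt' 1 τ).const_mul C).add ((hU τ).const_mul γ))
      (by
        have h1 : Continuous (fun τ => wzt 1 τ) :=
          hwztc.comp (continuous_const.prodMk continuous_id)
        exact (continuous_const.mul h1).add (continuous_const.mul hU'c))
      (fun τ hτ => by
        show C * wz 1 τ + γ * U τ = 0
        linarith [hbc τ hτ]) t ht
    have key' : C * wzt 1 t + γ * U' t = 0 := key
    linarith
  -- derivative of the storage integral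
  set F : ℝ → ℝ → ℝ := fun τ z => C * (wzt z τ)^2 + ρ * (wtt z τ)^2 with hF
  set F' : ℝ → ℝ → ℝ := fun τ z =>
    C * (2 * wzt z τ * wztt z τ) + ρ * (2 * wtt z τ * wttt z τ) with hF'
  have hd : ∀ z τ : ℝ, HasDerivAt (fun σ => F σ z) (F' τ z) τ := by
    intro z τ
    have h1 := (((hwztt z τ).pow 2).const_mul C).add (((hwttt z τ).pow 2).const_mul ρ)
    have h2 : HasDerivAt (fun σ => F σ z) (C * (((2:ℕ):ℝ) * wzt z τ ^ (2 - 1) * wztt z τ)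
        + ρ * (((2:ℕ):ℝ) * wtt z τ ^ (2 - 1) * wttt z τ)) τ := h1
    refine h2.congr_deriv ?_
    simp only [hF', Nat.cast_ofNat]
    ring
  have hFc : Continuous (Function.uncurry F) :=
    (continuous_const.mul (czt.pow 2)).add (continuous_const.mul (ctt.pow 2))
  have hF'c : Continuous (Function.uncurry F') :=
    (continuous_const.mul ((continuous_const.mul czt).mul cztt)).add
      (continuous_const.mul ((continuous_const.mul ctt).mul cttt))
  have hS : HasDerivAt (fun τ => ∫ z in (0:ℝ)..1, F τ z) (∫ z in (0:ℝ)..1, F' t z) t :=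
    param_hasDerivAt F F' hd hFc hF'c t
  -- evaluate the integral ∫ F' t z via integration by parts in z
  have hIcc : Set.uIcc (0:ℝ) 1 = Set.Icc (0:ℝ) 1 := Set.uIcc_of_le zero_le_one
  have hG : ∀ z ∈ Set.uIcc (0:ℝ) 1,
      HasDerivAt (fun ζ => (2 * C) * (wzt ζ t * wtt ζ t))
        ((2 * C) * (wzzt z t * wtt z t + wzt z t * wztt z t)) z := by
    intro z _
    exact ((hwzzt' z t).mul (hwztt' z t)).const_mul (2 * C)
  have hint1 : IntervalIntegrable
      (fun z => (2 * C) * (wzzt z t * wtt z t + wzt z t * wztt z t)) volume 0 1 := by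
    have c1 : Continuous (fun z => wzzt z t) :=
      hwzztc.comp (continuous_id.prodMk continuous_const)
    have c2 : Continuous (fun z => wtt z t) :=
      hwttc.comp (continuous_id.prodMk continuous_const)
    have c3 : Continuous (fun z => wzt z t) :=
      hwztc.comp (continuous_id.prodMk continuous_const)
    have c4 : Continuous (fun z => wztt z t) :=
      hwzttc.comp (continuous_id.prodMk continuous_const)
    exact (continuous_const.mul ((c1.mul c2).add (c3.mul c4))).intervalIntegrable 0 1
  have hint2 : IntervalIntegrable (fun z => (-(2 * b)) * (wtt z t)^2) volume 0 1 := by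
    have c2 : Continuous (fun z => wtt z t) :=
      hwttc.comp (continuous_id.prodMk continuous_const)
    exact (continuous_const.mul (c2.pow 2)).intervalIntegrable 0 1
  have hIval : (∫ z in (0:ℝ)..1, F' t z)
      = (2 * C) * (wzt 1 t * wtt 1 t) - (2 * C) * (wzt 0 t * wtt 0 t)
        + (-(2 * b)) * ∫ z in (0:ℝ)..1, (wtt z t)^2 := by
    have hcong : ∀ z ∈ Set.uIcc (0:ℝ) 1,
        F' t z = (2 * C) * (wzzt z t * wtt z t + wzt z t * wztt z t)
          + (-(2 * b)) * (wtt z t)^2 := by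
      intro z hz
      rw [hIcc] at hz
      have hp := hpde' z hz
      simp only [hF']
      linear_combination (2 * wtt z t) * hp
    rw [intervalIntegral.integral_congr hcong, intervalIntegral.integral_add hint1 hint2,
      intervalIntegral.integral_eq_sub_of_hasDerivAt hG hint1,
      intervalIntegral.integral_const_mul]
  -- derivative of the shaping term
  have hU2 : HasDerivAt (fun τ => Ki/2 * (U τ - Ustar)^2)
      (Ki/2 * (2 * (U t - Ustar)^1 * U' t)) t :=
    (((hU t).sub_const Ustar).pow 2).const_mul (Ki/2)
  have hsum := (hS.const_mul (1/2 : ℝ)).add hU2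
  have hval : (1/2 : ℝ) * (∫ z in (0:ℝ)..1, F' t z) + Ki/2 * (2 * (U t - Ustar)^1 * U' t)
      = -(b * ∫ z in (0:ℝ)..1, (wtt z t)^2) - Kp * (U' t)^2 := by
    rw [hIval, hwtt0]
    linear_combination (wtt 1 t) * hbc' + (U' t) * (hlaw t ht)
  have hJ : (0:ℝ) ≤ ∫ z in (0:ℝ)..1, (wtt z t)^2 :=
    intervalIntegral.integral_nonneg zero_le_one (fun z _ => sq_nonneg _)
  refine ⟨?_, ?_⟩
  · rw [← hval]
    exact hsum
  · have h1 : (0:ℝ) ≤ b * ∫ z in (0:ℝ)..1, (wtt z t)^2 := mul_nonneg hb.le hJ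
    have h2 : (0:ℝ) ≤ Kp * (U' t)^2 := mul_nonneg hKp.le (sq_nonneg _)
    linarith
end

section
/- (Input shaping, integrated dissipation bound.) Under the hypotheses of the input-shaping dissipation identity (C·w_z(1,t) = −γ·U(t), K_p·U'(t) = −K_i·(U(t) − U*) + γ·w_tt(1,t) with γ, K_i, K_p > 0, U* ∈ ℝ, and S_d(t) = S(t) + (K_i/2)·(U(t) − U*)²), for every T ≥ 0 one has ∫₀ᵀ ( b·∫₀¹ w_tt(z,t)² dz + K_p·U'(t)² ) dt = S_d(0) − S_d(T) ≤ S_d(0). -/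
open MeasureTheory intervalIntegral Metric

/-- If `f` vanishes on `[0,∞)` and has continuous derivative `f'`, then `f'` vanishes there. -/
lemma ext_deriv_zero (f f' : ℝ → ℝ)
    (hf : ∀ t : ℝ, HasDerivAt f (f' t) t) (hc : Continuous f')
    (h0 : ∀ t : ℝ, 0 ≤ t → f t = 0) : ∀ t : ℝ, 0 ≤ t → f' t = 0 := by
  have hIoi : Set.EqOn f' (fun _ => (0:ℝ)) (Set.Ioi 0) := by
    intro t ht
    have hev : (fun _ : ℝ => (0:ℝ)) =ᶠ[nhds t] f := by
      filter_upwards [Ioi_mem_nhds ht] with s hs using (h0 s (le_of_lt hs)).symm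
    have h0' : HasDerivAt f 0 t := (hasDerivAt_const t (0:ℝ)).congr_of_eventuallyEq hev.symm
    exact (hf t).unique h0'
  intro t ht
  have := hIoi.closure hc continuous_const
  have ht' : t ∈ closure (Set.Ioi (0:ℝ)) := by rw [closure_Ioi]; exact ht
  exact this ht'

/-- Differentiation under the interval integral for jointly continuous data. -/
lemma param_hasDerivAt_s14 (G G' : ℝ → ℝ → ℝ)
    (hG : ∀ z t : ℝ, HasDerivAt (fun τ => G z τ) (G' z t) t)
    (hGc : Continuous (Function.uncurry G))
    (hG'c : Continuous (Function.uncurry G')) (t : ℝ) :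
    HasDerivAt (fun τ => ∫ z in (0:ℝ)..1, G z τ) (∫ z in (0:ℝ)..1, G' z t) t := by
  have hK : IsCompact ((Set.Icc (0:ℝ) 1) ×ˢ (Set.Icc (t-1) (t+1))) :=
    isCompact_Icc.prod isCompact_Icc
  obtain ⟨M, hM⟩ := hK.exists_bound_of_continuousOn hG'c.continuousOn
  have cont1 : ∀ x : ℝ, Continuous (fun z => G z x) := fun x =>
    hGc.comp (continuous_id.prodMk continuous_const)
  have cont2 : ∀ x : ℝ, Continuous (fun z => G' z x) := fun x =>
    hG'c.comp (continuous_id.prodMk continuous_const)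
  have key := intervalIntegral.hasDerivAt_integral_of_dominated_loc_of_deriv_le
    (F := fun x z => G z x) (F' := fun x z => G' z x) (x₀ := t)
    (bound := fun _ => M) (a := 0) (b := 1) (μ := volume) (s := ball t 1) (ball_mem_nhds t one_pos)
    (Filter.Eventually.of_forall fun x => ((cont1 x).aestronglyMeasurable).restrict)
    ((cont1 t).intervalIntegrable 0 1)
    ((cont2 t).aestronglyMeasurable).restrict
    ?_ intervalIntegrable_const ?_
  · exact key.2
  · refine Filter.Eventually.of_forall fun z hz x hx => ?_
    have hz' : z ∈ Set.Icc (0:ℝ) 1 := Set.Ioc_subset_Icc_self (by simpa [Set.uIoc_of_le] using hz)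
    have hx' : x ∈ Set.Icc (t-1) (t+1) := by
      rw [mem_ball, Real.dist_eq] at hx
      constructor <;> [linarith [abs_lt.mp hx]; linarith [abs_lt.mp hx]]
    exact hM (z, x) ⟨hz', hx'⟩
  · exact Filter.Eventually.of_forall fun z _ x _ => hG z x



/-- Input shaping, integrated dissipation bound:
∫₀ᵀ (b·∫₀¹ w_tt² dz + K_p·U'(t)²) dt = S_d(0) − S_d(T) ≤ S_d(0). -/
theorem input_shaping_integrated
    (ρ C b : ℝ) (hρ : 0 < ρ) (hC : 0 < C) (hb : 0 < b)
    (w wz wt wzz wzt wtt : ℝ → ℝ → ℝ)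
    (hwz : ∀ z t : ℝ, HasDerivAt (fun ζ => w ζ t) (wz z t) z)
    (hwt : ∀ z t : ℝ, HasDerivAt (fun τ => w z τ) (wt z t) t)
    (hwzz : ∀ z t : ℝ, HasDerivAt (fun ζ => wz ζ t) (wzz z t) z)
    (hwzt : ∀ z t : ℝ, HasDerivAt (fun ζ => wt ζ t) (wzt z t) z)
    (hwzt' : ∀ z t : ℝ, HasDerivAt (fun τ => wz z τ) (wzt z t) t)
    (hwtt : ∀ z t : ℝ, HasDerivAt (fun τ => wt z τ) (wtt z t) t)
    (hwzc : Continuous (Function.uncurry wz))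
    (hwtc : Continuous (Function.uncurry wt))
    (hwzzc : Continuous (Function.uncurry wzz))
    (hwztc : Continuous (Function.uncurry wzt))
    (hwttc : Continuous (Function.uncurry wtt))
    (hpde : ∀ z ∈ Set.Icc (0:ℝ) 1, ∀ t : ℝ, 0 ≤ t →
      ρ * wtt z t = C * wzz z t - b * wt z t)
    (hclamp : ∀ t : ℝ, 0 ≤ t → w 0 t = 0)
    (wzzt wztt wttt : ℝ → ℝ → ℝ)
    (hwzzt : ∀ z t : ℝ, HasDerivAt (fun τ => wzz z τ) (wzzt z t) t)
    (hwzzt' : ∀ z t : ℝ, HasDerivAt (fun ζ => wzt ζ t) (wzzt z t) z)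
    (hwztt : ∀ z t : ℝ, HasDerivAt (fun τ => wzt z τ) (wztt z t) t)
    (hwztt' : ∀ z t : ℝ, HasDerivAt (fun ζ => wtt ζ t) (wztt z t) z)
    (hwttt : ∀ z t : ℝ, HasDerivAt (fun τ => wtt z τ) (wttt z t) t)
    (hwzztc : Continuous (Function.uncurry wzzt))
    (hwzttc : Continuous (Function.uncurry wztt))
    (hwtttc : Continuous (Function.uncurry wttt))
    (γ Ki Kp Ustar : ℝ) (hγ : 0 < γ) (hKi : 0 < Ki) (hKp : 0 < Kp)
    (U U' : ℝ → ℝ)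
    (hU : ∀ t : ℝ, HasDerivAt U (U' t) t) (hU'c : Continuous U')
    (hbc : ∀ t : ℝ, 0 ≤ t → C * wz 1 t = -γ * U t)
    (hlaw : ∀ t : ℝ, 0 ≤ t → Kp * U' t = -Ki * (U t - Ustar) + γ * wtt 1 t) :
    ∀ T : ℝ, 0 ≤ T →
      (∫ t in (0:ℝ)..T,
          (b * (∫ z in (0:ℝ)..1, (wtt z t)^2) + Kp * (U' t)^2))
          = ((1/2) * (∫ z in (0:ℝ)..1, (C * (wzt z (0:ℝ))^2 + ρ * (wtt z (0:ℝ))^2)) + Ki/2 * (U (0:ℝ) - Ustar)^2) - ((1/2) * (∫ z in (0:ℝ)..1, (C * (wzt z T)^2 + ρ * (wtt z T)^2)) + Ki/2 * (U T - Ustar)^2) ∧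
        ((1/2) * (∫ z in (0:ℝ)..1, (C * (wzt z (0:ℝ))^2 + ρ * (wtt z (0:ℝ))^2)) + Ki/2 * (U (0:ℝ) - Ustar)^2) - ((1/2) * (∫ z in (0:ℝ)..1, (C * (wzt z T)^2 + ρ * (wtt z T)^2)) + Ki/2 * (U T - Ustar)^2) ≤ ((1/2) * (∫ z in (0:ℝ)..1, (C * (wzt z (0:ℝ))^2 + ρ * (wtt z (0:ℝ))^2)) + Ki/2 * (U (0:ℝ) - Ustar)^2) := by

  intro T hT
  -- curried continuity helpers
  have cz : ∀ (f : ℝ → ℝ → ℝ), Continuous (Function.uncurry f) →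
      ∀ z : ℝ, Continuous fun τ => f z τ := fun f hf z =>
    hf.comp (continuous_const.prodMk continuous_id)
  have ct : ∀ (f : ℝ → ℝ → ℝ), Continuous (Function.uncurry f) →
      ∀ t : ℝ, Continuous fun ζ => f ζ t := fun f hf t =>
    hf.comp (continuous_id.prodMk continuous_const)
  -- boundary facts
  have hwt0 : ∀ t : ℝ, 0 ≤ t → wt 0 t = 0 :=
    ext_deriv_zero (fun τ => w 0 τ) (fun τ => wt 0 τ) (fun t => hwt 0 t)
      (cz wt hwtc 0) hclamp
  have hwtt0 : ∀ t : ℝ, 0 ≤ t → wtt 0 t = 0 :=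
    ext_deriv_zero (fun τ => wt 0 τ) (fun τ => wtt 0 τ) (fun t => hwtt 0 t)
      (cz wtt hwttc 0) hwt0
  have hbc' : ∀ t : ℝ, 0 ≤ t → C * wzt 1 t + γ * U' t = 0 :=
    ext_deriv_zero (fun τ => C * wz 1 τ + γ * U τ) (fun τ => C * wzt 1 τ + γ * U' τ)
      (fun t => ((hwzt' 1 t).const_mul C).add ((hU t).const_mul γ))
      ((continuous_const.mul (cz wzt hwztc 1)).add (continuous_const.mul hU'c))
      (fun s hs => by
        show C * wz 1 s + γ * U s = 0
        have := hbc s hs; linarith)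
  -- time-differentiated PDE on [0,1] × [0,∞)
  have hpde' : ∀ z ∈ Set.Icc (0:ℝ) 1, ∀ t : ℝ, 0 ≤ t →
      ρ * wttt z t = C * wzzt z t - b * wtt z t := by
    intro z hz t ht
    have h := ext_deriv_zero (fun τ => ρ * wtt z τ - C * wzz z τ + b * wt z τ)
      (fun τ => ρ * wttt z τ - C * wzzt z τ + b * wtt z τ)
      (fun s => (((hwttt z s).const_mul ρ).sub ((hwzzt z s).const_mul C)).add
        ((hwtt z s).const_mul b))
      (((continuous_const.mul (cz wttt hwtttc z)).sub
        (continuous_const.mul (cz wzzt hwzztc z))).add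
        (continuous_const.mul (cz wtt hwttc z)))
      (fun s hs => by
        show ρ * wtt z s - C * wzz z s + b * wt z s = 0
        have := hpde z hz s hs; linarith) t ht
    have h' : ρ * wttt z t - C * wzzt z t + b * wtt z t = 0 := h
    linarith
  -- derivative of the velocity storage integral
  have hGc : Continuous (Function.uncurry fun z τ => C * (wzt z τ)^2 + ρ * (wtt z τ)^2) := by
    show Continuous fun p : ℝ × ℝ =>
      C * (Function.uncurry wzt p)^2 + ρ * (Function.uncurry wtt p)^2
    exact (continuous_const.mul (hwztc.pow 2)).add (continuous_const.mul (hwttc.pow 2))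
  have hG'c : Continuous (Function.uncurry fun z τ =>
      2 * C * wzt z τ * wztt z τ + 2 * ρ * wtt z τ * wttt z τ) := by
    show Continuous fun p : ℝ × ℝ =>
      2 * C * Function.uncurry wzt p * Function.uncurry wztt p +
        2 * ρ * Function.uncurry wtt p * Function.uncurry wttt p
    exact ((continuous_const.mul hwztc).mul hwzttc).add
      ((continuous_const.mul hwttc).mul hwtttc)
  have hG : ∀ z t : ℝ, HasDerivAt (fun τ => C * (wzt z τ)^2 + ρ * (wtt z τ)^2)
      (2 * C * wzt z t * wztt z t + 2 * ρ * wtt z t * wttt z t) t := by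
    intro z t
    have h := (((hwztt z t).fun_pow 2).const_mul C).fun_add (((hwttt z t).fun_pow 2).const_mul ρ)
    exact h.congr_deriv (by push_cast; ring)
  have hS : ∀ t : ℝ, HasDerivAt
      (fun τ => ∫ z in (0:ℝ)..1, (C * (wzt z τ)^2 + ρ * (wtt z τ)^2))
      (∫ z in (0:ℝ)..1, (2 * C * wzt z t * wztt z t + 2 * ρ * wtt z t * wttt z t)) t :=
    param_hasDerivAt_s14 _ _ hG hGc hG'c
  -- derivative of the kinetic integral (for continuity)
  have hNc2 : Continuous (Function.uncurry fun z τ => (wtt z τ)^2) := by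
    show Continuous fun p : ℝ × ℝ => (Function.uncurry wtt p)^2
    exact hwttc.pow 2
  have hN'c : Continuous (Function.uncurry fun z τ => 2 * wtt z τ * wttt z τ) := by
    show Continuous fun p : ℝ × ℝ =>
      2 * Function.uncurry wtt p * Function.uncurry wttt p
    exact (continuous_const.mul hwttc).mul hwtttc
  have hN : ∀ t : ℝ, HasDerivAt (fun τ => ∫ z in (0:ℝ)..1, (wtt z τ)^2)
      (∫ z in (0:ℝ)..1, (2 * wtt z t * wttt z t)) t := by
    refine param_hasDerivAt_s14 _ _ (fun z t => ?_) hNc2 hN'c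
    have h := (hwttt z t).fun_pow 2
    exact h.congr_deriv (by push_cast; ring)
  have hNcont : Continuous (fun τ => ∫ z in (0:ℝ)..1, (wtt z τ)^2) :=
    continuous_iff_continuousAt.mpr fun t => (hN t).continuousAt
  -- evaluation of the integral of the spatial derivative term, for t ≥ 0
  have hIntG' : ∀ t : ℝ, 0 ≤ t →
      (∫ z in (0:ℝ)..1, (2 * C * wzt z t * wztt z t + 2 * ρ * wtt z t * wttt z t))
        = 2 * C * (wzt 1 t * wtt 1 t) - 2 * b * (∫ z in (0:ℝ)..1, (wtt z t)^2) := by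
    intro t ht
    have int1 : IntervalIntegrable
        (fun z => 2 * C * (wzzt z t * wtt z t + wzt z t * wztt z t)) volume 0 1 :=
      (continuous_const.mul (((ct wzzt hwzztc t).mul (ct wtt hwttc t)).add
        ((ct wzt hwztc t).mul (ct wztt hwzttc t)))).intervalIntegrable 0 1
    have int2 : IntervalIntegrable (fun z => 2 * b * (wtt z t)^2) volume 0 1 :=
      (continuous_const.mul ((ct wtt hwttc t).pow 2)).intervalIntegrable 0 1
    have hftc : (∫ z in (0:ℝ)..1, 2 * C * (wzzt z t * wtt z t + wzt z t * wztt z t))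
        = 2 * C * (wzt 1 t * wtt 1 t) - 2 * C * (wzt 0 t * wtt 0 t) := by
      have := intervalIntegral.integral_eq_sub_of_hasDerivAt
        (f := fun ζ => 2 * C * (wzt ζ t * wtt ζ t))
        (f' := fun z => 2 * C * (wzzt z t * wtt z t + wzt z t * wztt z t))
        (fun z _ => ((hwzzt' z t).mul (hwztt' z t)).const_mul (2 * C)) int1
      rw [this]
    have hcongr : (∫ z in (0:ℝ)..1,
        (2 * C * wzt z t * wztt z t + 2 * ρ * wtt z t * wttt z t))
        = ∫ z in (0:ℝ)..1,
          (2 * C * (wzzt z t * wtt z t + wzt z t * wztt z t) - 2 * b * (wtt z t)^2) := by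
      apply intervalIntegral.integral_congr
      intro z hz
      have hz' : z ∈ Set.Icc (0:ℝ) 1 := by rwa [Set.uIcc_of_le zero_le_one] at hz
      have hp := hpde' z hz' t ht
      linear_combination (2 * wtt z t) * hp
    rw [hcongr, intervalIntegral.integral_sub int1 int2, hftc,
      intervalIntegral.integral_const_mul, hwtt0 t ht]
    ring
  -- derivative of S_d
  have hSd : ∀ t : ℝ, 0 ≤ t → HasDerivAt
      (fun τ => (1/2) * (∫ z in (0:ℝ)..1, (C * (wzt z τ)^2 + ρ * (wtt z τ)^2))
        + Ki/2 * (U τ - Ustar)^2)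
      (-(b * (∫ z in (0:ℝ)..1, (wtt z t)^2) + Kp * (U' t)^2)) t := by
    intro t ht
    have hd := ((hS t).const_mul (1/2 : ℝ)).fun_add
      ((((hU t).sub_const Ustar).fun_pow 2).const_mul (Ki/2))
    refine hd.congr_deriv ?_
    push_cast
    linear_combination ((1/2 : ℝ) * hIntG' t ht + (wtt 1 t) * hbc' t ht
      + (U' t) * hlaw t ht)
  -- FTC on [0, T]
  have hEcont : Continuous (fun t : ℝ =>
      -(b * (∫ z in (0:ℝ)..1, (wtt z t)^2) + Kp * (U' t)^2)) :=
    ((continuous_const.mul hNcont).add (continuous_const.mul (hU'c.pow 2))).neg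
  have hFTC := intervalIntegral.integral_eq_sub_of_hasDerivAt
    (f := fun τ => (1/2) * (∫ z in (0:ℝ)..1, (C * (wzt z τ)^2 + ρ * (wtt z τ)^2))
      + Ki/2 * (U τ - Ustar)^2)
    (f' := fun t => -(b * (∫ z in (0:ℝ)..1, (wtt z t)^2) + Kp * (U' t)^2))
    (fun t htm => hSd t (by
      rw [Set.uIcc_of_le hT] at htm
      exact htm.1)) (hEcont.intervalIntegrable 0 T)
  rw [intervalIntegral.integral_neg] at hFTC
  have hmain : (∫ t in (0:ℝ)..T,
      (b * (∫ z in (0:ℝ)..1, (wtt z t)^2) + Kp * (U' t)^2))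
      = ((1/2) * (∫ z in (0:ℝ)..1, (C * (wzt z (0:ℝ))^2 + ρ * (wtt z (0:ℝ))^2))
          + Ki/2 * (U (0:ℝ) - Ustar)^2)
        - ((1/2) * (∫ z in (0:ℝ)..1, (C * (wzt z T)^2 + ρ * (wtt z T)^2))
          + Ki/2 * (U T - Ustar)^2) := by linarith
  refine ⟨hmain, ?_⟩
  have hpos : 0 ≤ ∫ z in (0:ℝ)..1, (C * (wzt z T)^2 + ρ * (wtt z T)^2) :=
    intervalIntegral.integral_nonneg zero_le_one (fun z _ => by positivity)
  nlinarith [sq_nonneg (U T - Ustar), hKi.le]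
end

section
/- (Proposition 3, concrete stability bound for the input-shaping closed loop.) Let additionally γ, K_i, K_p > 0 and U* ∈ ℝ be constants, and let U : [0,∞) → ℝ be continuously differentiable with C·w_z(1,t) = −γ·U(t) and K_p·U'(t) = −K_i·(U(t) − U*) + γ·w_tt(1,t) for all t ≥ 0. Define M(t) = ∫₀¹ ( (C·w_zt(z,t))² + w_tt(z,t)² + w_zt(z,t)² + (ρ·w_tt(z,t))² ) dz + (U(t) − U*)². Then for all t ≥ 0, M(t) ≤ (γ₂/γ₁)·M(0), where γ₁ = (1/4)·min{1/C, C, ρ, 1/ρ, 2·K_i} and γ₂ = (1/4)·max{1/C, C, ρ, 1/ρ, 2·K_i}. In particular, the closed-loop equilibrium is stable in the sense of Lyapunov with respect to the norm whose square is M. -/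
open MeasureTheory intervalIntegral

open Metric in
/-- If `g` has continuous derivative `g'` and vanishes on `[0,∞)`, then `g'`
vanishes on `[0,∞)` as well. -/
lemma deriv_zero_of_zero_on_Ici {g g' : ℝ → ℝ}
    (hg : ∀ t, HasDerivAt g (g' t) t) (hg'c : Continuous g')
    (hz : ∀ t : ℝ, 0 ≤ t → g t = 0) : ∀ t : ℝ, 0 ≤ t → g' t = 0 := by
  have hpos : ∀ t : ℝ, 0 < t → g' t = 0 := by
    intro t ht
    have hev : g =ᶠ[nhds t] fun _ => 0 := by
      filter_upwards [Ioi_mem_nhds ht] with s hs using hz s (le_of_lt hs)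
    exact (hg t).unique ((hasDerivAt_const t (0:ℝ)).congr_of_eventuallyEq hev)
  intro t ht
  rcases eq_or_lt_of_le ht with h | h
  · subst h
    have h1 : Filter.Tendsto g' (nhdsWithin (0:ℝ) (Set.Ioi 0)) (nhds (g' 0)) :=
      (hg'c.tendsto 0).mono_left nhdsWithin_le_nhds
    have h2 : Filter.Tendsto g' (nhdsWithin (0:ℝ) (Set.Ioi 0)) (nhds 0) := by
      have hev : g' =ᶠ[nhdsWithin (0:ℝ) (Set.Ioi 0)] fun _ => 0 := by
        filter_upwards [self_mem_nhdsWithin] with s hs using hpos s hs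
      rw [Filter.tendsto_congr' hev]; exact tendsto_const_nhds
    exact tendsto_nhds_unique h1 h2
  · exact hpos t h

open Metric in
/-- Differentiation of a parametric interval integral over `[0,1]` when everything
is jointly continuous. -/
lemma hasDerivAt_param_integral {F F' : ℝ → ℝ → ℝ}
    (hFc : Continuous fun p : ℝ × ℝ => F p.1 p.2)
    (hF'c : Continuous fun p : ℝ × ℝ => F' p.1 p.2)
    (hd : ∀ x t : ℝ, HasDerivAt (fun y => F y t) (F' x t) x) (x₀ : ℝ) :
    HasDerivAt (fun x => ∫ t in (0:ℝ)..1, F x t) (∫ t in (0:ℝ)..1, F' x₀ t) x₀ := by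
  obtain ⟨K, hK⟩ := ((isCompact_closedBall x₀ 1).prod
    (isCompact_Icc (a := (0:ℝ)) (b := 1))).exists_bound_of_continuousOn hF'c.continuousOn
  have hsub : Set.uIoc (0:ℝ) 1 ⊆ Set.Icc 0 1 := by
    rw [Set.uIoc_of_le zero_le_one]; exact Set.Ioc_subset_Icc_self
  exact (intervalIntegral.hasDerivAt_integral_of_dominated_loc_of_deriv_le
    (F := F) (F' := F') (bound := fun _ => K) (s := ball x₀ 1) (ball_mem_nhds x₀ one_pos)
    (Filter.Eventually.of_forall fun x =>
      (hFc.comp (continuous_const.prodMk continuous_id)).aestronglyMeasurable)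
    ((hFc.comp (continuous_const.prodMk continuous_id)).intervalIntegrable 0 1)
    (hF'c.comp (continuous_const.prodMk continuous_id)).aestronglyMeasurable
    (Filter.Eventually.of_forall fun t ht x hx =>
      hK (x, t) ⟨ball_subset_closedBall hx, hsub ht⟩)
    (intervalIntegrable_const)
    (Filter.Eventually.of_forall fun t ht x hx => hd x t)).2

set_option maxHeartbeats 1000000 in
/-- Proposition 3, concrete stability bound for the input-shaping closed
loop: M(t) ≤ (γ₂/γ₁)·M(0) for all t ≥ 0. -/
theorem input_shaping_stability_bound
    (ρ C b : ℝ) (hρ : 0 < ρ) (hC : 0 < C) (hb : 0 < b)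
    (w wz wt wzz wzt wtt : ℝ → ℝ → ℝ)
    (hwz : ∀ z t : ℝ, HasDerivAt (fun ζ => w ζ t) (wz z t) z)
    (hwt : ∀ z t : ℝ, HasDerivAt (fun τ => w z τ) (wt z t) t)
    (hwzz : ∀ z t : ℝ, HasDerivAt (fun ζ => wz ζ t) (wzz z t) z)
    (hwzt : ∀ z t : ℝ, HasDerivAt (fun ζ => wt ζ t) (wzt z t) z)
    (hwzt' : ∀ z t : ℝ, HasDerivAt (fun τ => wz z τ) (wzt z t) t)
    (hwtt : ∀ z t : ℝ, HasDerivAt (fun τ => wt z τ) (wtt z t) t)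
    (hwzc : Continuous (Function.uncurry wz))
    (hwtc : Continuous (Function.uncurry wt))
    (hwzzc : Continuous (Function.uncurry wzz))
    (hwztc : Continuous (Function.uncurry wzt))
    (hwttc : Continuous (Function.uncurry wtt))
    (hpde : ∀ z ∈ Set.Icc (0:ℝ) 1, ∀ t : ℝ, 0 ≤ t →
      ρ * wtt z t = C * wzz z t - b * wt z t)
    (hclamp : ∀ t : ℝ, 0 ≤ t → w 0 t = 0)
    (wzzt wztt wttt : ℝ → ℝ → ℝ)
    (hwzzt : ∀ z t : ℝ, HasDerivAt (fun τ => wzz z τ) (wzzt z t) t)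
    (hwzzt' : ∀ z t : ℝ, HasDerivAt (fun ζ => wzt ζ t) (wzzt z t) z)
    (hwztt : ∀ z t : ℝ, HasDerivAt (fun τ => wzt z τ) (wztt z t) t)
    (hwztt' : ∀ z t : ℝ, HasDerivAt (fun ζ => wtt ζ t) (wztt z t) z)
    (hwttt : ∀ z t : ℝ, HasDerivAt (fun τ => wtt z τ) (wttt z t) t)
    (hwzztc : Continuous (Function.uncurry wzzt))
    (hwzttc : Continuous (Function.uncurry wztt))
    (hwtttc : Continuous (Function.uncurry wttt))
    (γ Ki Kp Ustar : ℝ) (hγ : 0 < γ) (hKi : 0 < Ki) (hKp : 0 < Kp)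
    (U U' : ℝ → ℝ)
    (hU : ∀ t : ℝ, HasDerivAt U (U' t) t) (hU'c : Continuous U')
    (hbc : ∀ t : ℝ, 0 ≤ t → C * wz 1 t = -γ * U t)
    (hlaw : ∀ t : ℝ, 0 ≤ t → Kp * U' t = -Ki * (U t - Ustar) + γ * wtt 1 t) :
    ∀ t : ℝ, 0 ≤ t →
      ((∫ z in (0:ℝ)..1, ((C * wzt z t)^2 + (wtt z t)^2 + (wzt z t)^2 + (ρ * wtt z t)^2)) + (U t - Ustar)^2)
        ≤ ((1/4) * max (max (1/C) C) (max (max ρ (1/ρ)) (2*Ki)))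
            / ((1/4) * min (min (1/C) C) (min (min ρ (1/ρ)) (2*Ki)))
          * ((∫ z in (0:ℝ)..1, ((C * wzt z (0:ℝ))^2 + (wtt z (0:ℝ))^2 + (wzt z (0:ℝ))^2 + (ρ * wtt z (0:ℝ))^2)) + (U (0:ℝ) - Ustar)^2) := by
  -- continuity helpers
  have contz : ∀ {h : ℝ → ℝ → ℝ}, Continuous (Function.uncurry h) →
      ∀ t : ℝ, Continuous fun z => h z t := fun hh t =>
    hh.comp (continuous_id.prodMk continuous_const)
  have contt : ∀ {h : ℝ → ℝ → ℝ}, Continuous (Function.uncurry h) →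
      ∀ z : ℝ, Continuous fun t => h z t := fun hh z =>
    hh.comp (continuous_const.prodMk continuous_id)
  have conts : ∀ {h : ℝ → ℝ → ℝ}, Continuous (Function.uncurry h) →
      Continuous fun p : ℝ × ℝ => h p.2 p.1 := fun hh =>
    hh.comp (continuous_snd.prodMk continuous_fst)
  -- the gains
  set γ₁ : ℝ := (1/4) * min (min (1/C) C) (min (min ρ (1/ρ)) (2*Ki)) with hγ₁def
  set γ₂ : ℝ := (1/4) * max (max (1/C) C) (max (max ρ (1/ρ)) (2*Ki)) with hγ₂def
  have hγ₁pos : 0 < γ₁ := by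
    rw [hγ₁def]; positivity
  have hγ₁a : γ₁ ≤ (1/4) * (1/C) := by
    rw [hγ₁def]
    nlinarith [(min_le_left (min (1/C) C) (min (min ρ (1/ρ)) (2*Ki))).trans (min_le_left (1/C) C)]
  have hγ₁b : γ₁ ≤ (1/4) * C := by
    rw [hγ₁def]
    nlinarith [(min_le_left (min (1/C) C) (min (min ρ (1/ρ)) (2*Ki))).trans (min_le_right (1/C) C)]
  have hγ₁c : γ₁ ≤ (1/4) * ρ := by
    rw [hγ₁def]
    nlinarith [(min_le_right (min (1/C) C) (min (min ρ (1/ρ)) (2*Ki))).trans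
      ((min_le_left (min ρ (1/ρ)) (2*Ki)).trans (min_le_left ρ (1/ρ)))]
  have hγ₁d : γ₁ ≤ (1/4) * (1/ρ) := by
    rw [hγ₁def]
    nlinarith [(min_le_right (min (1/C) C) (min (min ρ (1/ρ)) (2*Ki))).trans
      ((min_le_left (min ρ (1/ρ)) (2*Ki)).trans (min_le_right ρ (1/ρ)))]
  have hγ₁e : γ₁ ≤ (1/4) * (2*Ki) := by
    rw [hγ₁def]
    nlinarith [(min_le_right (min (1/C) C) (min (min ρ (1/ρ)) (2*Ki))).trans
      (min_le_right (min ρ (1/ρ)) (2*Ki))]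
  have hγ₂a : (1/4) * (1/C) ≤ γ₂ := by
    rw [hγ₂def]
    nlinarith [(le_max_left (max (1/C) C) (max (max ρ (1/ρ)) (2*Ki))).trans'
      (le_max_left (1/C) C)]
  have hγ₂b : (1/4) * C ≤ γ₂ := by
    rw [hγ₂def]
    nlinarith [(le_max_left (max (1/C) C) (max (max ρ (1/ρ)) (2*Ki))).trans'
      (le_max_right (1/C) C)]
  have hγ₂c : (1/4) * ρ ≤ γ₂ := by
    rw [hγ₂def]
    nlinarith [(le_max_right (max (1/C) C) (max (max ρ (1/ρ)) (2*Ki))).trans'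
      ((le_max_left (max ρ (1/ρ)) (2*Ki)).trans' (le_max_left ρ (1/ρ)))]
  have hγ₂d : (1/4) * (1/ρ) ≤ γ₂ := by
    rw [hγ₂def]
    nlinarith [(le_max_right (max (1/C) C) (max (max ρ (1/ρ)) (2*Ki))).trans'
      ((le_max_left (max ρ (1/ρ)) (2*Ki)).trans' (le_max_right ρ (1/ρ)))]
  have hγ₂e : (1/4) * (2*Ki) ≤ γ₂ := by
    rw [hγ₂def]
    nlinarith [(le_max_right (max (1/C) C) (max (max ρ (1/ρ)) (2*Ki))).trans'
      (le_max_right (max ρ (1/ρ)) (2*Ki))]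
  -- pointwise continuity instances
  have cwzt := fun t => contz hwztc t
  have cwtt := fun t => contz hwttc t
  have cwzzt := fun t => contz hwzztc t
  have cwztt := fun t => contz hwzttc t
  -- boundary facts
  have hwt0 : ∀ t : ℝ, 0 ≤ t → wt 0 t = 0 :=
    deriv_zero_of_zero_on_Ici (fun τ => hwt 0 τ) (contt hwtc 0) hclamp
  have hwtt0 : ∀ t : ℝ, 0 ≤ t → wtt 0 t = 0 :=
    deriv_zero_of_zero_on_Ici (fun τ => hwtt 0 τ) (contt hwttc 0) hwt0
  have hC1 : ∀ t : ℝ, 0 ≤ t → C * wzt 1 t + γ * U' t = 0 :=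
    deriv_zero_of_zero_on_Ici (g := fun τ => C * wz 1 τ + γ * U τ)
      (fun τ => ((hwzt' 1 τ).const_mul C).add ((hU τ).const_mul γ))
      ((continuous_const.mul (contt hwztc 1)).add (continuous_const.mul hU'c))
      (fun τ hτ => by show C * wz 1 τ + γ * U τ = 0; rw [hbc τ hτ]; ring)
  -- time-differentiated PDE
  have hpdet : ∀ z ∈ Set.Icc (0:ℝ) 1, ∀ t : ℝ, 0 ≤ t →
      ρ * wttt z t = C * wzzt z t - b * wtt z t := by
    intro z hzmem t ht
    have h0 := deriv_zero_of_zero_on_Ici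
      (g := fun τ => ρ * wtt z τ - (C * wzz z τ - b * wt z τ))
      (g' := fun τ => ρ * wttt z τ - (C * wzzt z τ - b * wtt z τ))
      (fun τ => ((hwttt z τ).const_mul ρ).sub
        (((hwzzt z τ).const_mul C).sub ((hwtt z τ).const_mul b)))
      (((continuous_const.mul (contt hwtttc z)).sub
        ((continuous_const.mul (contt hwzztc z)).sub (continuous_const.mul (contt hwttc z)))))
      (fun τ hτ => by show ρ * wtt z τ - (C * wzz z τ - b * wt z τ) = 0; rw [hpde z hzmem τ hτ]; ring) t ht
    have h0' : ρ * wttt z t - (C * wzzt z t - b * wtt z t) = 0 := h0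
    linarith
  -- the Lyapunov function and its derivative
  have hEderiv : ∀ t : ℝ, HasDerivAt
      (fun τ => (∫ z in (0:ℝ)..1, (C/2 * (wzt z τ)^2 + ρ/2 * (wtt z τ)^2))
        + Ki/2 * (U τ - Ustar)^2)
      ((∫ z in (0:ℝ)..1, (C * (wzt z t * wztt z t) + ρ * (wtt z t * wttt z t)))
        + Ki * (U t - Ustar) * U' t) t := by
    intro t
    have hint := hasDerivAt_param_integral
      (F := fun τ z => C/2 * (wzt z τ)^2 + ρ/2 * (wtt z τ)^2)
      (F' := fun τ z => C * (wzt z τ * wztt z τ) + ρ * (wtt z τ * wttt z τ))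
      ((continuous_const.mul ((conts hwztc).pow 2)).add (continuous_const.mul ((conts hwttc).pow 2)))
      ((continuous_const.mul ((conts hwztc).mul (conts hwzttc))).add
        (continuous_const.mul ((conts hwttc).mul (conts hwtttc))))
      (fun x z => by
        have h : HasDerivAt (fun τ => C/2 * (wzt z τ)^2 + ρ/2 * (wtt z τ)^2) _ x := (((hwztt z x).fun_pow 2).const_mul (C/2)).add
          (((hwttt z x).fun_pow 2).const_mul (ρ/2))
        convert h using 1
        push_cast; ring) t
    have hu : HasDerivAt (fun τ => Ki/2 * (U τ - Ustar)^2) (Ki * (U t - Ustar) * U' t) t := by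
      have h : HasDerivAt (fun τ => Ki/2 * (U τ - Ustar)^2) _ t := (((hU t).sub_const Ustar).fun_pow 2).const_mul (Ki/2)
      convert h using 1
      push_cast; ring
    exact hint.add hu
  -- the derivative is nonpositive for t ≥ 0
  have hgnp : ∀ t : ℝ, 0 ≤ t →
      (∫ z in (0:ℝ)..1, (C * (wzt z t * wztt z t) + ρ * (wtt z t * wttt z t)))
        + Ki * (U t - Ustar) * U' t ≤ 0 := by
    intro t ht
    have hcongr : (∫ z in (0:ℝ)..1, (C * (wzt z t * wztt z t) + ρ * (wtt z t * wttt z t)))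
        = ∫ z in (0:ℝ)..1,
            (C * (wzzt z t * wtt z t + wzt z t * wztt z t) - b * (wtt z t)^2) := by
      apply intervalIntegral.integral_congr
      intro z hz
      rw [Set.uIcc_of_le zero_le_one] at hz
      have h := hpdet z hz t ht
      simp only
      linear_combination (wtt z t) * h
    have hintA : IntervalIntegrable
        (fun z => C * (wzzt z t * wtt z t + wzt z t * wztt z t)) volume 0 1 :=
      (continuous_const.mul (((cwzzt t).mul (cwtt t)).add ((cwzt t).mul (cwztt t)))).intervalIntegrable 0 1
    have hintB : IntervalIntegrable (fun z => (wtt z t)^2) volume 0 1 :=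
      ((cwtt t).pow 2).intervalIntegrable 0 1
    have hsplit : (∫ z in (0:ℝ)..1,
          (C * (wzzt z t * wtt z t + wzt z t * wztt z t) - b * (wtt z t)^2))
        = (∫ z in (0:ℝ)..1, C * (wzzt z t * wtt z t + wzt z t * wztt z t))
          - b * ∫ z in (0:ℝ)..1, (wtt z t)^2 := by
      rw [intervalIntegral.integral_sub hintA (hintB.const_mul b)]
      simp [intervalIntegral.integral_const_mul]
    have hftc : (∫ z in (0:ℝ)..1, C * (wzzt z t * wtt z t + wzt z t * wztt z t))
        = C * (wzt 1 t * wtt 1 t) - C * (wzt 0 t * wtt 0 t) := by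
      apply intervalIntegral.integral_eq_sub_of_hasDerivAt
        (f := fun z => C * (wzt z t * wtt z t))
      · intro z hz
        exact ((hwzzt' z t).mul (hwztt' z t)).const_mul C
      · exact hintA
    have hInn : 0 ≤ ∫ z in (0:ℝ)..1, (wtt z t)^2 :=
      intervalIntegral.integral_nonneg zero_le_one (fun z _ => sq_nonneg _)
    have hbdry : C * (wzt 1 t * wtt 1 t) = -(U' t) * (Kp * U' t + Ki * (U t - Ustar)) := by
      have h1 := hC1 t ht
      have h2 := hlaw t ht
      have e1 : C * (wzt 1 t * wtt 1 t) = (C * wzt 1 t) * wtt 1 t := by ring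
      have e2 : (C * wzt 1 t) = -γ * U' t := by linarith
      rw [e1, e2]
      have e3 : γ * wtt 1 t = Kp * U' t + Ki * (U t - Ustar) := by linarith
      calc -γ * U' t * wtt 1 t = -(U' t) * (γ * wtt 1 t) := by ring
        _ = -(U' t) * (Kp * U' t + Ki * (U t - Ustar)) := by rw [e3]
    rw [hcongr, hsplit, hftc, hbdry, hwtt0 t ht]
    nlinarith [sq_nonneg (U' t), mul_nonneg hb.le hInn, mul_nonneg hKp.le (sq_nonneg (U' t))]
  -- E is antitone on [0,∞)
  have hEdiff : Differentiable ℝ (fun τ =>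
      (∫ z in (0:ℝ)..1, (C/2 * (wzt z τ)^2 + ρ/2 * (wtt z τ)^2))
        + Ki/2 * (U τ - Ustar)^2) := fun τ => (hEderiv τ).differentiableAt
  have hmono : AntitoneOn (fun τ =>
      (∫ z in (0:ℝ)..1, (C/2 * (wzt z τ)^2 + ρ/2 * (wtt z τ)^2))
        + Ki/2 * (U τ - Ustar)^2) (Set.Ici 0) := by
    apply antitoneOn_of_deriv_nonpos (convex_Ici 0) hEdiff.continuous.continuousOn
      hEdiff.differentiableOn
    intro x hx
    rw [interior_Ici] at hx
    rw [(hEderiv x).deriv]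
    exact hgnp x hx.le
  -- pointwise comparison inequalities between integrands
  have key_lower : ∀ a e : ℝ,
      γ₁ * ((C*a)^2 + e^2 + a^2 + (ρ*e)^2) ≤ C/2 * a^2 + ρ/2 * e^2 := by
    intro a e
    have e1 : (1/4) * (1/C) * (C*a)^2 = C/4 * a^2 := by field_simp
    have e4 : (1/4) * (1/ρ) * (ρ*e)^2 = ρ/4 * e^2 := by field_simp
    nlinarith [mul_le_mul_of_nonneg_right hγ₁a (sq_nonneg (C*a)),
      mul_le_mul_of_nonneg_right hγ₁b (sq_nonneg a),
      mul_le_mul_of_nonneg_right hγ₁c (sq_nonneg e),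
      mul_le_mul_of_nonneg_right hγ₁d (sq_nonneg (ρ*e))]
  have key_upper : ∀ a e : ℝ,
      C/2 * a^2 + ρ/2 * e^2 ≤ γ₂ * ((C*a)^2 + e^2 + a^2 + (ρ*e)^2) := by
    intro a e
    have e1 : (1/4) * (1/C) * (C*a)^2 = C/4 * a^2 := by field_simp
    have e4 : (1/4) * (1/ρ) * (ρ*e)^2 = ρ/4 * e^2 := by field_simp
    nlinarith [mul_le_mul_of_nonneg_right hγ₂a (sq_nonneg (C*a)),
      mul_le_mul_of_nonneg_right hγ₂b (sq_nonneg a),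
      mul_le_mul_of_nonneg_right hγ₂c (sq_nonneg e),
      mul_le_mul_of_nonneg_right hγ₂d (sq_nonneg (ρ*e))]
  -- integrability of the two integrands
  have intM : ∀ t : ℝ, IntervalIntegrable
      (fun z => (C * wzt z t)^2 + (wtt z t)^2 + (wzt z t)^2 + (ρ * wtt z t)^2) volume 0 1 :=
    fun t => ((((continuous_const.mul (cwzt t)).pow 2).add ((cwtt t).pow 2)).add
      ((cwzt t).pow 2) |>.add ((continuous_const.mul (cwtt t)).pow 2)).intervalIntegrable 0 1
  have intF : ∀ t : ℝ, IntervalIntegrable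
      (fun z => C/2 * (wzt z t)^2 + ρ/2 * (wtt z t)^2) volume 0 1 :=
    fun t => ((continuous_const.mul ((cwzt t).pow 2)).add
      (continuous_const.mul ((cwtt t).pow 2))).intervalIntegrable 0 1
  -- lower and upper bounds for E in terms of M
  have lowerB : ∀ t : ℝ,
      γ₁ * ((∫ z in (0:ℝ)..1, ((C * wzt z t)^2 + (wtt z t)^2 + (wzt z t)^2 + (ρ * wtt z t)^2))
          + (U t - Ustar)^2)
        ≤ (∫ z in (0:ℝ)..1, (C/2 * (wzt z t)^2 + ρ/2 * (wtt z t)^2))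
          + Ki/2 * (U t - Ustar)^2 := by
    intro t
    have h1 : γ₁ * (∫ z in (0:ℝ)..1,
          ((C * wzt z t)^2 + (wtt z t)^2 + (wzt z t)^2 + (ρ * wtt z t)^2))
        ≤ ∫ z in (0:ℝ)..1, (C/2 * (wzt z t)^2 + ρ/2 * (wtt z t)^2) := by
      rw [← intervalIntegral.integral_const_mul]
      apply intervalIntegral.integral_mono_on zero_le_one ((intM t).const_mul γ₁) (intF t)
      intro z _
      exact key_lower (wzt z t) (wtt z t)
    have h2 : γ₁ * (U t - Ustar)^2 ≤ Ki/2 * (U t - Ustar)^2 := by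
      have := mul_le_mul_of_nonneg_right hγ₁e (sq_nonneg (U t - Ustar))
      linarith [this]
    linarith [h1, h2]
  have upperB :
      (∫ z in (0:ℝ)..1, (C/2 * (wzt z (0:ℝ))^2 + ρ/2 * (wtt z (0:ℝ))^2))
          + Ki/2 * (U (0:ℝ) - Ustar)^2
        ≤ γ₂ * ((∫ z in (0:ℝ)..1, ((C * wzt z (0:ℝ))^2 + (wtt z (0:ℝ))^2
            + (wzt z (0:ℝ))^2 + (ρ * wtt z (0:ℝ))^2)) + (U (0:ℝ) - Ustar)^2) := by
    have h1 : (∫ z in (0:ℝ)..1, (C/2 * (wzt z (0:ℝ))^2 + ρ/2 * (wtt z (0:ℝ))^2))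
        ≤ γ₂ * (∫ z in (0:ℝ)..1, ((C * wzt z (0:ℝ))^2 + (wtt z (0:ℝ))^2
            + (wzt z (0:ℝ))^2 + (ρ * wtt z (0:ℝ))^2)) := by
      rw [← intervalIntegral.integral_const_mul]
      apply intervalIntegral.integral_mono_on zero_le_one (intF 0) ((intM 0).const_mul γ₂)
      intro z _
      exact key_upper (wzt z 0) (wtt z 0)
    have h2 : Ki/2 * (U (0:ℝ) - Ustar)^2 ≤ γ₂ * (U (0:ℝ) - Ustar)^2 := by
      have := mul_le_mul_of_nonneg_right hγ₂e (sq_nonneg (U (0:ℝ) - Ustar))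
      linarith [this]
    linarith [h1, h2]
  -- conclusion
  intro t ht
  have hmle := hmono (Set.self_mem_Ici) ht ht
  have hlow := lowerB t
  have hfin : γ₁ * ((∫ z in (0:ℝ)..1,
        ((C * wzt z t)^2 + (wtt z t)^2 + (wzt z t)^2 + (ρ * wtt z t)^2)) + (U t - Ustar)^2)
      ≤ γ₂ * ((∫ z in (0:ℝ)..1, ((C * wzt z (0:ℝ))^2 + (wtt z (0:ℝ))^2
          + (wzt z (0:ℝ))^2 + (ρ * wtt z (0:ℝ))^2)) + (U (0:ℝ) - Ustar)^2) := by
    exact le_trans hlow (le_trans hmle upperB)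
  rw [div_mul_eq_mul_div, le_div_iff₀ hγ₁pos]
  linarith [hfin]
end
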